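/- arXiv:1503.06460 — 5 statements merged into one kernel-verified Lean document; each statement's English description precedes it below -/
import Mathlib

section
/- In ℝⁿ, for any two Borel probability measures μ₀, μ₁ with finite second moments and any displacement interpolation μ_t = ((1−t)·Id + t·T)_# μ₀, where T is an optimal transport map from μ₀ to μ₁ for quadratic cost, the function t ↦ Var(μ_t) is convex on [0,1]. -/
open MeasureTheory Set Filter

/-- The variance of a measure on a metric space: the infimal second moment. -/
noncomputable def var {M : Type*} [MetricSpace M] [MeasurableSpace M] (mu : Measure M) : ℝ :=
  ⨅ y : M, ∫ x, dist x y ^ 2 ∂mu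

/-- The squared 2-Wasserstein distance, as the infimal quadratic transport cost over couplings. -/
noncomputable def W2sq {M : Type*} [MetricSpace M] [MeasurableSpace M] (mu nu : Measure M) : ℝ :=
  sInf ((fun gamma : Measure (M × M) => ∫ p, dist p.1 p.2 ^ 2 ∂gamma) ''
    {gamma | gamma.map Prod.fst = mu ∧ gamma.map Prod.snd = nu})



variable {α : Type*} [MeasurableSpace α] {E : Type*} [NormedAddCommGroup E]
  [InnerProductSpace ℝ E] [CompleteSpace E]

local notation "⟪" x ", " y "⟫" => @inner ℝ _ _ x y

/-- norm-square integrable implies integrable (on a probability measure). -/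
lemma aux_int_of_sq {μ : Measure α} [IsProbabilityMeasure μ] {Z : α → E}
    (hZm : AEStronglyMeasurable Z μ) (hZ2 : Integrable (fun x => ‖Z x‖ ^ 2) μ) :
    Integrable Z μ := by
  refine Integrable.mono' ((integrable_const (1:ℝ)).add hZ2) hZm ?_
  filter_upwards with x
  have h := sq_nonneg (‖Z x‖ - 1)
  show ‖Z x‖ ≤ (1:ℝ) + ‖Z x‖ ^ 2
  nlinarith [norm_nonneg (Z x)]

lemma aux_inner_int {μ : Measure α} {Z W : α → E}
    (hZm : AEStronglyMeasurable Z μ) (hWm : AEStronglyMeasurable W μ)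
    (hZ2 : Integrable (fun x => ‖Z x‖ ^ 2) μ) (hW2 : Integrable (fun x => ‖W x‖ ^ 2) μ) :
    Integrable (fun x => ⟪Z x, W x⟫) μ := by
  refine Integrable.mono' (hZ2.add hW2) (hZm.inner hWm) ?_
  filter_upwards with x
  have h := abs_real_inner_le_norm (Z x) (W x)
  have h2 := sq_nonneg (‖Z x‖ - ‖W x‖)
  show ‖⟪Z x, W x⟫‖ ≤ ‖Z x‖ ^ 2 + ‖W x‖ ^ 2
  rw [Real.norm_eq_abs]
  nlinarith [norm_nonneg (Z x), norm_nonneg (W x)]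

lemma aux_sub_sq_int {μ : Measure α} [IsProbabilityMeasure μ] {Z : α → E}
    (hZm : AEStronglyMeasurable Z μ) (hZ2 : Integrable (fun x => ‖Z x‖ ^ 2) μ) (c : E) :
    Integrable (fun x => ‖Z x - c‖ ^ 2) μ := by
  have h : (fun x => ‖Z x - c‖ ^ 2) = fun x => ‖Z x‖ ^ 2 - 2 * ⟪Z x, c⟫ + ‖c‖ ^ 2 := by
    funext x; rw [norm_sub_sq_real]
  rw [h]
  exact (hZ2.sub ((aux_inner_int hZm aestronglyMeasurable_const hZ2
    (integrable_const _)).const_mul 2)).add (integrable_const _)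

lemma aux_var_eq {μ : Measure α} [IsProbabilityMeasure μ] {Z : α → E}
    (hZm : AEStronglyMeasurable Z μ) (hZ2 : Integrable (fun x => ‖Z x‖ ^ 2) μ) :
    ⨅ y : E, ∫ x, ‖Z x - y‖ ^ 2 ∂μ = ∫ x, ‖Z x - ∫ z, Z z ∂μ‖ ^ 2 ∂μ := by
  set m := ∫ z, Z z ∂μ with hm
  have hZint : Integrable Z μ := aux_int_of_sq hZm hZ2
  have hsubint : Integrable (fun x => Z x - m) μ := hZint.sub (integrable_const m)
  have hsub0 : ∫ x, (Z x - m) ∂μ = 0 := by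
    rw [integral_sub hZint (integrable_const m), integral_const]
    simp only [measure_univ, probReal_univ, ENNReal.toReal_one, one_smul, hm, sub_self]
  have key : ∀ y : E, ∫ x, ‖Z x - y‖ ^ 2 ∂μ = (∫ x, ‖Z x - m‖ ^ 2 ∂μ) + ‖m - y‖ ^ 2 := by
    intro y
    have hexp : ∀ x, ‖Z x - y‖ ^ 2
        = ‖Z x - m‖ ^ 2 + (2 * ⟪m - y, Z x - m⟫ + ‖m - y‖ ^ 2) := by
      intro x
      have h : Z x - y = (Z x - m) + (m - y) := by abel
      rw [h, norm_add_sq_real, real_inner_comm]; ring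
    have hint1 : Integrable (fun x => ‖Z x - m‖ ^ 2) μ := aux_sub_sq_int hZm hZ2 m
    have h2a : Integrable (fun x => 2 * ⟪m - y, Z x - m⟫) μ := by
      have := (aux_inner_int (Z := fun _ : α => m - y) (W := fun x => Z x - m)
        aestronglyMeasurable_const (hZm.sub aestronglyMeasurable_const)
        (integrable_const _) (aux_sub_sq_int hZm hZ2 m)).const_mul 2
      exact this
    have hint2 : Integrable (fun x => 2 * ⟪m - y, Z x - m⟫ + ‖m - y‖ ^ 2) μ :=
      h2a.add (integrable_const _)
    calc ∫ x, ‖Z x - y‖ ^ 2 ∂μ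
        = ∫ x, (‖Z x - m‖ ^ 2 + (2 * ⟪m - y, Z x - m⟫ + ‖m - y‖ ^ 2)) ∂μ := by
          exact integral_congr_ae (Filter.Eventually.of_forall hexp)
      _ = (∫ x, ‖Z x - m‖ ^ 2 ∂μ)
            + ((∫ x, 2 * ⟪m - y, Z x - m⟫ ∂μ) + ∫ x, (‖m - y‖ ^ 2 : ℝ) ∂μ) := by
          rw [integral_add hint1 hint2, integral_add h2a (integrable_const _)]
      _ = (∫ x, ‖Z x - m‖ ^ 2 ∂μ) + ‖m - y‖ ^ 2 := by
          rw [integral_const_mul, integral_inner hsubint, hsub0, inner_zero_right]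
          simp
  refine le_antisymm ?_ (le_ciInf fun y => ?_)
  case refine_2 =>
    show ∫ x, ‖Z x - m‖ ^ 2 ∂μ ≤ ∫ x, ‖Z x - y‖ ^ 2 ∂μ
    rw [key y]; exact le_add_of_nonneg_right (sq_nonneg _)
  have hbdd : BddBelow (Set.range fun y : E => ∫ x, ‖Z x - y‖ ^ 2 ∂μ) := by
    refine ⟨∫ x, ‖Z x - m‖ ^ 2 ∂μ, ?_⟩
    rintro _ ⟨y, rfl⟩
    show ∫ x, ‖Z x - m‖ ^ 2 ∂μ ≤ ∫ x, ‖Z x - y‖ ^ 2 ∂μ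
    rw [key y]; exact le_add_of_nonneg_right (sq_nonneg _)
  exact ciInf_le hbdd m

set_option maxHeartbeats 1000000

/-- Displacement convexity of the variance in ℝⁿ: along the displacement interpolation
`μ_t = ((1-t)Id + tT)_# μ₀` given by an optimal transport map `T` for the quadratic cost,
the variance is convex in `t` on `[0,1]`. -/
theorem variance_displacement_convex_euclidean (n : ℕ)
    (μ₀ μ₁ : Measure (EuclideanSpace ℝ (Fin n)))
    [IsProbabilityMeasure μ₀] [IsProbabilityMeasure μ₁]
    (h0 : Integrable (fun x => ‖x‖ ^ 2) μ₀) (h1 : Integrable (fun x => ‖x‖ ^ 2) μ₁)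
    (T : EuclideanSpace ℝ (Fin n) → EuclideanSpace ℝ (Fin n))
    (hTmeas : Measurable T) (hTpush : μ₀.map T = μ₁)
    (hTopt : ∀ γ : Measure (EuclideanSpace ℝ (Fin n) × EuclideanSpace ℝ (Fin n)),
      γ.map Prod.fst = μ₀ → γ.map Prod.snd = μ₁ →
      (∫ x, ‖x - T x‖ ^ 2 ∂μ₀) ≤ ∫ p, ‖p.1 - p.2‖ ^ 2 ∂γ) :
    ConvexOn ℝ (Set.Icc (0 : ℝ) 1)
      (fun t => var (μ₀.map (fun x => (1 - t) • x + t • T x))) := by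
  classical
  -- integrability of ‖T x‖^2 under μ₀
  have hT2 : Integrable (fun x => ‖T x‖ ^ 2) μ₀ := by
    have h1' : Integrable (fun x : EuclideanSpace ℝ (Fin n) => ‖x‖ ^ 2) (μ₀.map T) := by rw [hTpush]; exact h1
    exact (integrable_map_measure ((continuous_norm.pow 2).aestronglyMeasurable)
      hTmeas.aemeasurable).mp h1'
  set f : ℝ → EuclideanSpace ℝ (Fin n) → EuclideanSpace ℝ (Fin n) := fun t x => (1 - t) • x + t • T x with hf
  have hfmeas : ∀ t, Measurable (f t) := fun t =>
    (measurable_id.const_smul (1 - t)).add (hTmeas.const_smul t)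
  have hf2 : ∀ t, Integrable (fun x => ‖f t x‖ ^ 2) μ₀ := by
    intro t
    refine Integrable.mono' (((h0.const_mul (2 * (1 - t) ^ 2)).add
      (hT2.const_mul (2 * t ^ 2)))) (((hfmeas t).norm.pow_const 2).aestronglyMeasurable) ?_
    filter_upwards with x
    have h := norm_add_le ((1 - t) • x) (t • T x)
    rw [norm_smul, norm_smul] at h
    show ‖‖f t x‖ ^ 2‖ ≤ 2 * (1 - t) ^ 2 * ‖x‖ ^ 2 + 2 * t ^ 2 * ‖T x‖ ^ 2
    rw [Real.norm_eq_abs, abs_of_nonneg (sq_nonneg _)]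
    have h1t : |1 - t| ^ 2 = (1 - t) ^ 2 := sq_abs _
    have ht : |t| ^ 2 = t ^ 2 := sq_abs _
    simp only [Real.norm_eq_abs] at h
    nlinarith [norm_nonneg (f t x), norm_nonneg x, norm_nonneg (T x),
      abs_nonneg (1 - t), abs_nonneg t,
      sq_nonneg (|1 - t| * ‖x‖ - |t| * ‖T x‖)]
  -- means and centered functions
  set m₀ : EuclideanSpace ℝ (Fin n) := ∫ x, x ∂μ₀ with hm₀
  set m₁' : EuclideanSpace ℝ (Fin n) := ∫ x, T x ∂μ₀ with hm₁'
  set a : EuclideanSpace ℝ (Fin n) → EuclideanSpace ℝ (Fin n) := fun x => x - m₀ with ha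
  set w : EuclideanSpace ℝ (Fin n) → EuclideanSpace ℝ (Fin n) := fun x => (T x - m₁') - (x - m₀) with hw
  have ham : AEStronglyMeasurable a μ₀ :=
    (measurable_id.sub measurable_const).aestronglyMeasurable
  have hwm : AEStronglyMeasurable w μ₀ :=
    ((hTmeas.sub measurable_const).sub (measurable_id.sub measurable_const)).aestronglyMeasurable
  have ha2 : Integrable (fun x => ‖a x‖ ^ 2) μ₀ :=
    aux_sub_sq_int aestronglyMeasurable_id h0 m₀
  have hTx2 : Integrable (fun x => ‖T x - x‖ ^ 2) μ₀ := by
    refine Integrable.mono' ((hT2.add h0).const_mul 2)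
      (((hTmeas.sub measurable_id).norm.pow_const 2).aestronglyMeasurable) ?_
    filter_upwards with x
    have h := norm_sub_le (T x) x
    show ‖‖T x - x‖ ^ 2‖ ≤ 2 * (‖T x‖ ^ 2 + ‖x‖ ^ 2)
    rw [Real.norm_eq_abs, abs_of_nonneg (sq_nonneg _)]
    nlinarith [norm_nonneg (T x - x), norm_nonneg (T x), norm_nonneg x,
      sq_nonneg (‖T x‖ - ‖x‖)]
  have hw2 : Integrable (fun x => ‖w x‖ ^ 2) μ₀ := by
    have : w = fun x => (T x - x) - (m₁' - m₀) := by funext x; simp [hw]; abel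
    rw [this]
    exact aux_sub_sq_int ((hTmeas.sub measurable_id).aestronglyMeasurable) hTx2 (m₁' - m₀)
  have haw : Integrable (fun x => ⟪a x, w x⟫) μ₀ := aux_inner_int ham hwm ha2 hw2
  -- the coefficients
  set Ca : ℝ := ∫ x, ‖a x‖ ^ 2 ∂μ₀ with hCa
  set Cb : ℝ := ∫ x, ⟪a x, w x⟫ ∂μ₀ with hCb
  set Cc : ℝ := ∫ x, ‖w x‖ ^ 2 ∂μ₀ with hCc
  have hCc0 : 0 ≤ Cc := integral_nonneg fun x => sq_nonneg _
  -- the variance as a quadratic in t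
  have hfun : ∀ t : ℝ, var (μ₀.map (f t)) = Ca + (2 * Cb) * t + Cc * t ^ 2 := by
    intro t
    have hx_int : Integrable (fun x : EuclideanSpace ℝ (Fin n) => x) μ₀ := aux_int_of_sq aestronglyMeasurable_id h0
    have hT_int : Integrable T μ₀ := aux_int_of_sq hTmeas.aestronglyMeasurable hT2
    have hstep1 : var (μ₀.map (f t)) = ⨅ y : EuclideanSpace ℝ (Fin n), ∫ x, ‖f t x - y‖ ^ 2 ∂μ₀ := by
      unfold var
      congr 1
      funext y
      rw [integral_map (f := fun z => dist z y ^ 2) (hfmeas t).aemeasurable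
        (Continuous.aestronglyMeasurable (by fun_prop : Continuous fun z : EuclideanSpace ℝ (Fin n) => dist z y ^ 2))]
      simp_rw [dist_eq_norm]
    have hmean : (∫ x, f t x ∂μ₀) = (1 - t) • m₀ + t • m₁' := by
      have hs1 : Integrable (fun x : EuclideanSpace ℝ (Fin n) => (1 - t) • x) μ₀ := by
        exact hx_int.smul (1 - t)
      have hs2 : Integrable (fun x => t • T x) μ₀ := by
        exact hT_int.smul t
      calc ∫ x, f t x ∂μ₀ = ∫ x, ((1 - t) • x + t • T x) ∂μ₀ := rfl
        _ = (∫ x, (1 - t) • x ∂μ₀) + ∫ x, t • T x ∂μ₀ := integral_add hs1 hs2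
        _ = (1 - t) • m₀ + t • m₁' := by rw [integral_smul, integral_smul]
    have hstep2 : ⨅ y : EuclideanSpace ℝ (Fin n), ∫ x, ‖f t x - y‖ ^ 2 ∂μ₀ = ∫ x, ‖f t x - ((1 - t) • m₀ + t • m₁')‖ ^ 2 ∂μ₀ := by
      rw [aux_var_eq ((hfmeas t).aestronglyMeasurable) (hf2 t), hmean]
    have hdiff : ∀ x, f t x - ((1 - t) • m₀ + t • m₁') = a x + t • w x := by
      intro x
      simp only [hf, ha, hw]
      module
    have hexp : ∀ x, ‖f t x - ((1 - t) • m₀ + t • m₁')‖ ^ 2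
        = ‖a x‖ ^ 2 + ((2 * t) * ⟪a x, w x⟫ + t ^ 2 * ‖w x‖ ^ 2) := by
      intro x
      rw [hdiff x, norm_add_sq_real, real_inner_smul_right, norm_smul, mul_pow,
        Real.norm_eq_abs, sq_abs]
      ring
    rw [hstep1, hstep2]
    calc ∫ x, ‖f t x - ((1 - t) • m₀ + t • m₁')‖ ^ 2 ∂μ₀
        = ∫ x, (‖a x‖ ^ 2 + ((2 * t) * ⟪a x, w x⟫ + t ^ 2 * ‖w x‖ ^ 2)) ∂μ₀ :=
          integral_congr_ae (Filter.Eventually.of_forall hexp)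
      _ = Ca + ((2 * t) * Cb + t ^ 2 * Cc) := by
          have hc1 : Integrable (fun x => (2 * t) * ⟪a x, w x⟫) μ₀ := by
            exact haw.const_mul _
          have hc2 : Integrable (fun x => t ^ 2 * ‖w x‖ ^ 2) μ₀ := by
            exact hw2.const_mul _
          have hbc : Integrable (fun x => (2 * t) * ⟪a x, w x⟫ + t ^ 2 * ‖w x‖ ^ 2) μ₀ := by
            exact hc1.add hc2
          rw [integral_add ha2 hbc, integral_add hc1 hc2,
            integral_const_mul, integral_const_mul]
      _ = Ca + (2 * Cb) * t + Cc * t ^ 2 := by ring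
  show ConvexOn ℝ (Set.Icc (0 : ℝ) 1) (fun t => var (μ₀.map (f t)))
  simp only [hfun]
  refine ⟨convex_Icc _ _, fun x _ y _ p q hp hq hpq => ?_⟩
  simp only [smul_eq_mul]
  have hq' : q = 1 - p := by linarith
  subst hq'
  nlinarith [mul_nonneg (mul_nonneg hCc0 (mul_nonneg hp hq)) (sq_nonneg (x - y))]
end

section
/- Stability of Wasserstein barycenters: let M be a compact metric space and suppose probability measures Ω_N on (P(M), W₂) converge weakly-* to Ω. If μ̄_N is a W₂-barycenter of Ω_N and μ̄_N → μ̄ weakly-*, then μ̄ is a W₂-barycenter of Ω. -/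
open MeasureTheory Set Filter

open ProbabilityTheory Metric
open scoped ENNReal NNReal BoundedContinuousFunction
set_option linter.unusedSectionVars false
set_option linter.unusedVariables false
set_option maxHeartbeats 1000000

namespace W2aux


variable {M : Type*} [MetricSpace M] [CompactSpace M] [Nonempty M] [MeasurableSpace M]
  [BorelSpace M]

/-- cost of a plan -/
noncomputable def cost (γ : Measure (M × M)) : ℝ := ∫ p, dist p.1 p.2 ^ 2 ∂γ

def IsCoupling (γ : Measure (M × M)) (μ ν : Measure M) : Prop :=
  γ.map Prod.fst = μ ∧ γ.map Prod.snd = ν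

lemma W2sq_eq (μ ν : Measure M) : W2sq μ ν = sInf (cost '' {γ | IsCoupling γ μ ν}) := rfl

noncomputable def D (M : Type*) [MetricSpace M] : ℝ := Metric.diam (Set.univ : Set M)

lemma D_nonneg : 0 ≤ D M := Metric.diam_nonneg

lemma dist_le_D (x y : M) : dist x y ≤ D M :=
  Metric.dist_le_diam_of_mem isCompact_univ.isBounded (mem_univ x) (mem_univ y)

lemma costfun_nonneg (p : M × M) : 0 ≤ dist p.1 p.2 ^ 2 := sq_nonneg _

lemma costfun_le (p : M × M) : dist p.1 p.2 ^ 2 ≤ D M ^ 2 :=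
  pow_le_pow_left₀ dist_nonneg (dist_le_D _ _) 2

lemma costfun_continuous : Continuous (fun p : M × M => dist p.1 p.2 ^ 2) := by
  fun_prop

lemma cost_integrable (γ : Measure (M × M)) [IsFiniteMeasure γ] :
    Integrable (fun p : M × M => dist p.1 p.2 ^ 2) γ := by
  refine Integrable.mono' (integrable_const (D M ^ 2))
    costfun_continuous.aestronglyMeasurable ?_
  filter_upwards with p
  rw [Real.norm_of_nonneg (costfun_nonneg p)]
  exact costfun_le p

lemma cost_nonneg (γ : Measure (M × M)) : 0 ≤ cost γ :=
  integral_nonneg costfun_nonneg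

lemma cost_le (γ : Measure (M × M)) [IsProbabilityMeasure γ] : cost γ ≤ D M ^ 2 := by
  calc cost γ ≤ ∫ _, D M ^ 2 ∂γ := integral_mono (cost_integrable γ) (integrable_const _) costfun_le
  _ = D M ^ 2 := by simp

lemma IsCoupling.isProbabilityMeasure {γ : Measure (M × M)} {μ ν : Measure M}
    [IsProbabilityMeasure μ] (h : IsCoupling γ μ ν) : IsProbabilityMeasure γ := by
  constructor
  have : γ.map Prod.fst Set.univ = 1 := by rw [h.1]; exact measure_univ
  rwa [Measure.map_apply measurable_fst MeasurableSet.univ, Set.preimage_univ] at this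

lemma isCoupling_prod (μ ν : Measure M) [IsProbabilityMeasure μ] [IsProbabilityMeasure ν] :
    IsCoupling (μ.prod ν) μ ν := by
  constructor
  · rw [Measure.map_fst_prod]; simp
  · rw [Measure.map_snd_prod]; simp

lemma couplings_nonempty (μ ν : Measure M) [IsProbabilityMeasure μ] [IsProbabilityMeasure ν] :
    {γ : Measure (M × M) | IsCoupling γ μ ν}.Nonempty := ⟨_, isCoupling_prod μ ν⟩

lemma bddBelow_costs (μ ν : Measure M) : BddBelow (cost '' {γ | IsCoupling γ μ ν}) := by
  refine ⟨0, fun x hx => ?_⟩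
  obtain ⟨γ, -, rfl⟩ := hx
  exact cost_nonneg γ

lemma W2sq_le_cost {γ : Measure (M × M)} {μ ν : Measure M} (h : IsCoupling γ μ ν) :
    W2sq μ ν ≤ cost γ :=
  csInf_le (bddBelow_costs μ ν) ⟨γ, h, rfl⟩

lemma W2sq_nonneg (μ ν : Measure M) [IsProbabilityMeasure μ] [IsProbabilityMeasure ν] :
    0 ≤ W2sq μ ν :=
  le_csInf ((couplings_nonempty μ ν).image _) (by rintro b ⟨γ, -, rfl⟩; exact cost_nonneg γ)

lemma W2sq_le_D_sq (μ ν : Measure M) [IsProbabilityMeasure μ] [IsProbabilityMeasure ν] :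
    W2sq μ ν ≤ D M ^ 2 := by
  have h := isCoupling_prod μ ν
  have : IsProbabilityMeasure (μ.prod ν) := h.isProbabilityMeasure
  exact (W2sq_le_cost h).trans (cost_le _)

lemma exists_coupling_lt (μ ν : Measure M) [IsProbabilityMeasure μ] [IsProbabilityMeasure ν]
    {ε : ℝ} (hε : 0 < ε) :
    ∃ γ : Measure (M × M), IsCoupling γ μ ν ∧ cost γ < W2sq μ ν + ε := by
  obtain ⟨x, hx, hlt⟩ := exists_lt_of_csInf_lt ((couplings_nonempty μ ν).image _)
    (show sInf _ < W2sq μ ν + ε from lt_add_of_pos_right _ hε)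
  obtain ⟨γ, hγ, rfl⟩ := hx
  exact ⟨γ, hγ, hlt⟩

lemma cost_map_swap (γ : Measure (M × M)) [IsProbabilityMeasure γ] :
    cost (γ.map Prod.swap) = cost γ := by
  unfold cost
  rw [integral_map measurable_swap.aemeasurable costfun_continuous.aestronglyMeasurable]
  simp [dist_comm]

lemma IsCoupling.swap {γ : Measure (M × M)} {μ ν : Measure M} (h : IsCoupling γ μ ν) :
    IsCoupling (γ.map Prod.swap) ν μ := by
  constructor
  · rw [Measure.map_map measurable_fst measurable_swap]; exact h.2
  · rw [Measure.map_map measurable_snd measurable_swap]; exact h.1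

lemma W2sq_comm (μ ν : Measure M) [IsProbabilityMeasure μ] [IsProbabilityMeasure ν] :
    W2sq μ ν = W2sq ν μ := by
  have key : ∀ (α β : Measure M), IsProbabilityMeasure α → IsProbabilityMeasure β →
      W2sq α β ≤ W2sq β α := by
    intro α β hα hβ
    rw [W2sq_eq β α]
    refine le_csInf ((couplings_nonempty β α).image _) ?_
    rintro b ⟨γ, hγ, rfl⟩
    show W2sq α β ≤ cost γ
    have : IsProbabilityMeasure γ := hγ.isProbabilityMeasure
    rw [← cost_map_swap γ]
    exact W2sq_le_cost hγ.swap
  exact le_antisymm (key μ ν ‹_› ‹_›) (key ν μ ‹_› ‹_›)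


section triangle2
variable {M : Type*} [MetricSpace M] [CompactSpace M] [Nonempty M] [MeasurableSpace M]
  [BorelSpace M]

variable (μ β α : Measure M) [IsProbabilityMeasure μ] [IsProbabilityMeasure β]
  [IsProbabilityMeasure α]

lemma bdd_cont_integrable {X : Type*} [TopologicalSpace X] [MeasurableSpace X]
    [OpensMeasurableSpace X] (ρ : Measure X) [IsFiniteMeasure ρ] {f : X → ℝ} (hf : Continuous f)
    (C : ℝ) (hC : ∀ x, |f x| ≤ C) : Integrable f ρ :=
  Integrable.mono' (integrable_const C) hf.aestronglyMeasurable
    (Eventually.of_forall fun x => hC x)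

lemma glue_cost {γ η : Measure (M × M)} (hγ : IsCoupling γ μ β) (hη : IsCoupling η β α) :
    W2sq μ α ≤ (Real.sqrt (cost γ) + Real.sqrt (cost η)) ^ 2 := by
  have hγp : IsProbabilityMeasure γ := hγ.isProbabilityMeasure
  have hηp : IsProbabilityMeasure η := hη.isProbabilityMeasure
  set γ' := γ.map Prod.swap with hγ'def
  have hγ' : IsCoupling γ' β μ := hγ.swap
  have hγ'p : IsProbabilityMeasure γ' := hγ'.isProbabilityMeasure
  have hfstγ' : γ'.fst = β := hγ'.1
  have hfstη : η.fst = β := hη.1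
  set κ := γ'.condKernel with hκdef
  set lam := η.condKernel with hlamdef
  set θ : Measure (M × (M × M)) := β ⊗ₘ (κ ×ₖ lam) with hθdef
  have hθp : IsProbabilityMeasure θ := by rw [hθdef]; infer_instance
  have hmap1 : θ.map (fun p => (p.1, p.2.1)) = γ' := by
    have hd : β ⊗ₘ κ = γ' := by rw [← hfstγ', hκdef]; exact γ'.disintegrate _
    rw [← hd]
    ext s hs
    rw [Measure.map_apply (by fun_prop) hs,
      Measure.compProd_apply (hs.preimage (by fun_prop)), Measure.compProd_apply hs]
    refine lintegral_congr fun y => ?_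
    rw [Kernel.prod_apply]
    have hset : (Prod.mk y ⁻¹' ((fun p : M × M × M => (p.1, p.2.1)) ⁻¹' s)) =
        (Prod.mk y ⁻¹' s) ×ˢ univ := by
      ext q; simp [Set.mem_prod]
    rw [hset, Measure.prod_prod, measure_univ, mul_one]
  have hmap2 : θ.map (fun p => (p.1, p.2.2)) = η := by
    have hd : β ⊗ₘ lam = η := by rw [← hfstη, hlamdef]; exact η.disintegrate _
    rw [← hd]
    ext s hs
    rw [Measure.map_apply (by fun_prop) hs,
      Measure.compProd_apply (hs.preimage (by fun_prop)), Measure.compProd_apply hs]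
    refine lintegral_congr fun y => ?_
    rw [Kernel.prod_apply]
    have hset : (Prod.mk y ⁻¹' ((fun p : M × M × M => (p.1, p.2.2)) ⁻¹' s)) =
        univ ×ˢ (Prod.mk y ⁻¹' s) := by
      ext q; simp [Set.mem_prod]
    rw [hset, Measure.prod_prod, measure_univ, one_mul]
  set G : Measure (M × M) := θ.map Prod.snd with hGdef
  have hG : IsCoupling G μ α := by
    constructor
    · rw [hGdef, Measure.map_map measurable_fst measurable_snd]
      have : (Prod.fst ∘ Prod.snd : M × M × M → M) =
          Prod.snd ∘ (fun p : M × M × M => (p.1, p.2.1)) := rfl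
      rw [this, ← Measure.map_map measurable_snd (by fun_prop), hmap1]
      exact hγ'.2
    · rw [hGdef, Measure.map_map measurable_snd measurable_snd]
      have : (Prod.snd ∘ Prod.snd : M × M × M → M) =
          Prod.snd ∘ (fun p : M × M × M => (p.1, p.2.2)) := rfl
      rw [this, ← Measure.map_map measurable_snd (by fun_prop), hmap2]
      exact hη.2
  -- cost estimate
  set F1 : M × M × M → ℝ := fun p => dist p.1 p.2.1 with hF1
  set F2 : M × M × M → ℝ := fun p => dist p.1 p.2.2 with hF2
  have hF1c : Continuous F1 := by fun_prop
  have hF2c : Continuous F2 := by fun_prop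
  have hI1 : ∫ p, F1 p ^ 2 ∂θ = cost γ := by
    have := integral_map (μ := θ) (φ := fun p : M × M × M => (p.1, p.2.1))
      (by fun_prop : AEMeasurable _ θ)
      (f := fun q : M × M => dist q.1 q.2 ^ 2) (by fun_prop : Continuous _).aestronglyMeasurable
    rw [hmap1] at this
    rw [← cost_map_swap γ, ← hγ'def]
    unfold cost
    rw [this]
  have hI2 : ∫ p, F2 p ^ 2 ∂θ = cost η := by
    have := integral_map (μ := θ) (φ := fun p : M × M × M => (p.1, p.2.2))
      (by fun_prop : AEMeasurable _ θ)
      (f := fun q : M × M => dist q.1 q.2 ^ 2) (by fun_prop : Continuous _).aestronglyMeasurable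
    rw [hmap2] at this
    unfold cost
    rw [this]
  have hcostG : cost G = ∫ p, dist p.2.1 p.2.2 ^ 2 ∂θ := by
    unfold cost
    rw [hGdef, integral_map (by fun_prop : AEMeasurable _ θ)
      (by fun_prop : Continuous fun q : M × M => dist q.1 q.2 ^ 2).aestronglyMeasurable]
  -- integrability
  have int1 : Integrable (fun p => F1 p ^ 2) θ :=
    bdd_cont_integrable θ (by fun_prop) (D M ^ 2) (fun x => by
      rw [abs_of_nonneg (sq_nonneg _)]
      exact pow_le_pow_left₀ dist_nonneg (dist_le_D _ _) 2)
  have int2 : Integrable (fun p => F2 p ^ 2) θ :=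
    bdd_cont_integrable θ (by fun_prop) (D M ^ 2) (fun x => by
      rw [abs_of_nonneg (sq_nonneg _)]
      exact pow_le_pow_left₀ dist_nonneg (dist_le_D _ _) 2)
  have int12 : Integrable (fun p => F1 p * F2 p) θ :=
    bdd_cont_integrable θ (by fun_prop) (D M ^ 2) (fun x => by
      rw [abs_of_nonneg (mul_nonneg dist_nonneg dist_nonneg)]
      have h1 := dist_le_D x.1 x.2.1
      have h2 := dist_le_D x.1 x.2.2
      have h3 : (0:ℝ) ≤ dist x.1 x.2.1 := dist_nonneg
      have h4 : (0:ℝ) ≤ dist x.1 x.2.2 := dist_nonneg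
      nlinarith)
  -- Cauchy–Schwarz
  have hmem1 : MemLp F1 (ENNReal.ofReal 2) θ :=
    MemLp.of_bound hF1c.aestronglyMeasurable (D M) (Eventually.of_forall fun x => by
      rw [Real.norm_of_nonneg dist_nonneg]; exact dist_le_D _ _)
  have hmem2 : MemLp F2 (ENNReal.ofReal 2) θ :=
    MemLp.of_bound hF2c.aestronglyMeasurable (D M) (Eventually.of_forall fun x => by
      rw [Real.norm_of_nonneg dist_nonneg]; exact dist_le_D _ _)
  have hCS : ∫ p, F1 p * F2 p ∂θ ≤ Real.sqrt (cost γ) * Real.sqrt (cost η) := by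
    have h := integral_mul_le_Lp_mul_Lq_of_nonneg Real.HolderConjugate.two_two
      (Eventually.of_forall fun x => dist_nonneg)
      (Eventually.of_forall fun x => dist_nonneg) hmem1 hmem2
    simp_rw [Real.rpow_two] at h
    rw [hI1, hI2] at h
    rwa [← Real.sqrt_eq_rpow, ← Real.sqrt_eq_rpow] at h
  -- final chain
  have hmono : cost G ≤ ∫ p, (F1 p + F2 p) ^ 2 ∂θ := by
    rw [hcostG]
    refine integral_mono (bdd_cont_integrable θ (by fun_prop) (D M ^ 2) (fun x => by
        rw [abs_of_nonneg (sq_nonneg _)]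
        exact pow_le_pow_left₀ dist_nonneg (dist_le_D _ _) 2)) ?_ ?_
    · have : (fun p => (F1 p + F2 p) ^ 2)
          = fun p => F1 p ^ 2 + 2 * (F1 p * F2 p) + F2 p ^ 2 := by
        funext p; ring
      rw [this]
      exact (int1.add (int12.const_mul 2)).add int2
    · intro p
      have h1 : dist p.2.1 p.2.2 ≤ F1 p + F2 p := by
        rw [hF1, hF2]
        calc dist p.2.1 p.2.2 ≤ dist p.2.1 p.1 + dist p.1 p.2.2 := dist_triangle _ _ _
        _ = dist p.1 p.2.1 + dist p.1 p.2.2 := by rw [dist_comm]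
      exact pow_le_pow_left₀ dist_nonneg h1 2
  have intA : Integrable (fun p => F1 p ^ 2 + 2 * (F1 p * F2 p)) θ :=
    int1.add (int12.const_mul 2)
  have hexp : ∫ p, (F1 p + F2 p) ^ 2 ∂θ
      = ∫ p, F1 p ^ 2 ∂θ + 2 * ∫ p, F1 p * F2 p ∂θ + ∫ p, F2 p ^ 2 ∂θ := by
    have heq : (fun p => (F1 p + F2 p) ^ 2)
        = fun p => (F1 p ^ 2 + 2 * (F1 p * F2 p)) + F2 p ^ 2 := by
      funext p; ring
    rw [heq, integral_add intA int2, integral_add int1 (int12.const_mul 2), MeasureTheory.integral_const_mul]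
  have : cost G ≤ (Real.sqrt (cost γ) + Real.sqrt (cost η)) ^ 2 := by
    rw [add_sq, Real.sq_sqrt (cost_nonneg γ), Real.sq_sqrt (cost_nonneg η)]
    calc cost G ≤ _ := hmono
    _ = _ := hexp
    _ ≤ _ := by
      rw [hI1, hI2]
      nlinarith [hCS]
  exact (W2sq_le_cost hG).trans this

end triangle2

section corollaries
variable {M : Type*} [MetricSpace M] [CompactSpace M] [Nonempty M] [MeasurableSpace M]
  [BorelSpace M]

lemma sqrt_add_le {a b : ℝ} (ha : 0 ≤ a) (hb : 0 ≤ b) :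
    Real.sqrt (a + b) ≤ Real.sqrt a + Real.sqrt b := by
  have h1 := Real.sq_sqrt ha
  have h2 := Real.sq_sqrt hb
  have h3 := Real.sqrt_nonneg a
  have h4 := Real.sqrt_nonneg b
  calc Real.sqrt (a + b) ≤ Real.sqrt ((Real.sqrt a + Real.sqrt b) ^ 2) :=
        Real.sqrt_le_sqrt (by nlinarith)
  _ = Real.sqrt a + Real.sqrt b := Real.sqrt_sq (by positivity)

lemma W2sq_triangle (μ β α : Measure M) [IsProbabilityMeasure μ] [IsProbabilityMeasure β]
    [IsProbabilityMeasure α] :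
    W2sq μ α ≤ (Real.sqrt (W2sq μ β) + Real.sqrt (W2sq β α)) ^ 2 := by
  have ha := W2sq_nonneg μ β
  have hb := W2sq_nonneg β α
  set s := Real.sqrt (W2sq μ β) + Real.sqrt (W2sq β α) with hs
  have hs0 : 0 ≤ s := by positivity
  refine le_of_forall_pos_le_add fun ε hε => ?_
  set m := min 1 (ε / (4 * (s + 1))) with hm
  have hm0 : 0 < m := lt_min one_pos (by positivity)
  have hm1 : m ≤ 1 := min_le_left _ _
  have hm2 : m ≤ ε / (4 * (s + 1)) := min_le_right _ _
  obtain ⟨γ, hγ, hγc⟩ := exists_coupling_lt μ β (show (0:ℝ) < m ^ 2 by positivity)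
  obtain ⟨η, hη, hηc⟩ := exists_coupling_lt β α (show (0:ℝ) < m ^ 2 by positivity)
  have h1 := glue_cost μ β α hγ hη
  have hγ0 := cost_nonneg γ
  have hη0 := cost_nonneg η
  have h2 : Real.sqrt (cost γ) ≤ Real.sqrt (W2sq μ β) + m := by
    calc Real.sqrt (cost γ) ≤ Real.sqrt (W2sq μ β + m ^ 2) := Real.sqrt_le_sqrt hγc.le
    _ ≤ Real.sqrt (W2sq μ β) + Real.sqrt (m ^ 2) := sqrt_add_le ha (by positivity)
    _ = Real.sqrt (W2sq μ β) + m := by rw [Real.sqrt_sq hm0.le]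
  have h3 : Real.sqrt (cost η) ≤ Real.sqrt (W2sq β α) + m := by
    calc Real.sqrt (cost η) ≤ Real.sqrt (W2sq β α + m ^ 2) := Real.sqrt_le_sqrt hηc.le
    _ ≤ Real.sqrt (W2sq β α) + Real.sqrt (m ^ 2) := sqrt_add_le hb (by positivity)
    _ = Real.sqrt (W2sq β α) + m := by rw [Real.sqrt_sq hm0.le]
  have h4 : (Real.sqrt (cost γ) + Real.sqrt (cost η)) ^ 2 ≤ (s + 2 * m) ^ 2 := by
    refine pow_le_pow_left₀ (by positivity) ?_ 2
    rw [hs]; linarith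
  have hsm : 4 * m * (s + 1) ≤ ε := by
    have hpos : (0:ℝ) < 4 * (s + 1) := by positivity
    have := (le_div_iff₀ hpos).mp hm2
    linarith
  have h5 : (s + 2 * m) ^ 2 ≤ s ^ 2 + ε := by nlinarith [hm0.le, hm1, hs0]
  calc W2sq μ α ≤ _ := h1
  _ ≤ (s + 2 * m) ^ 2 := h4
  _ ≤ s ^ 2 + ε := h5

lemma W2sq_le_add (μ β α : Measure M) [IsProbabilityMeasure μ] [IsProbabilityMeasure β]
    [IsProbabilityMeasure α] :
    W2sq μ α ≤ W2sq μ β + (2 * D M * Real.sqrt (W2sq β α) + W2sq β α) := by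
  have h := W2sq_triangle μ β α
  have h1 : Real.sqrt (W2sq μ β) ≤ D M := by
    rw [← Real.sqrt_sq (D_nonneg (M := M))]
    exact Real.sqrt_le_sqrt (W2sq_le_D_sq μ β)
  have h2 := Real.sq_sqrt (W2sq_nonneg μ β)
  have h3 := Real.sq_sqrt (W2sq_nonneg β α)
  have h4 := Real.sqrt_nonneg (W2sq β α)
  have h5 := Real.sqrt_nonneg (W2sq μ β)
  nlinarith [h]
end corollaries

section bigpart
variable {M : Type*} [MetricSpace M] [CompactSpace M] [Nonempty M] [MeasurableSpace M]
  [BorelSpace M]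

lemma frontier_diff_subset' (s t : Set M) : frontier (s \ t) ⊆ frontier s ∪ frontier t := by
  rw [diff_eq]
  refine (frontier_inter_subset s tᶜ).trans ?_
  rw [frontier_compl]
  exact union_subset_union inter_subset_left inter_subset_right

lemma frontier_iUnion_subset' {ι : Type*} [Finite ι] (f : ι → Set M) :
    frontier (⋃ i, f i) ⊆ ⋃ i, frontier (f i) := by
  intro x hx
  have hclos : x ∈ ⋃ i, closure (f i) := by
    rw [← closure_iUnion_of_finite]
    exact hx.1
  obtain ⟨j, hj⟩ := mem_iUnion.mp hclos
  refine mem_iUnion.mpr ⟨j, hj, fun hint => hx.2 ?_⟩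
  exact interior_mono (subset_iUnion f j) hint

section partition
variable (Q : Measure M) [IsProbabilityMeasure Q]

lemma exists_partition {δ : ℝ} (hδ : 0 < δ) :
    ∃ (k : ℕ) (A : Fin k → Set M),
      (∀ i, MeasurableSet (A i)) ∧ Pairwise (Function.onFun Disjoint A) ∧ (⋃ i, A i) = univ ∧
      (∀ i, Q (frontier (A i)) = 0) ∧ (∀ i, ∀ x ∈ A i, ∀ y ∈ A i, dist x y ≤ δ) := by
  have hrad : ∀ x : M, ∃ r : ℝ, r ∈ Ioo (0:ℝ) (δ/2) ∧ Q (frontier (ball x r)) = 0 := by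
    intro x
    obtain ⟨r, hr, hnull⟩ := exists_null_frontier_thickening Q {x} (half_pos hδ)
    exact ⟨r, hr, by rwa [Metric.thickening_singleton] at hnull⟩
  choose rad hrad1 hrad2 using hrad
  obtain ⟨t, ht⟩ := isCompact_univ.elim_finite_subcover (fun x : M => ball x (rad x))
    (fun x => isOpen_ball) (fun x _ => mem_iUnion.mpr ⟨x, mem_ball_self (hrad1 x).1⟩)
  set k := t.card with hk
  set e := t.equivFin with he
  set B : Fin k → Set M := fun i => ball (e.symm i : M) (rad (e.symm i)) with hB
  have hcoverB : (⋃ i, B i) = univ := by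
    apply eq_univ_of_univ_subset
    intro x hx
    obtain ⟨y, hy, hxy⟩ := mem_iUnion₂.mp (ht (mem_univ x))
    refine mem_iUnion.mpr ⟨e ⟨y, hy⟩, ?_⟩
    simpa [hB, Equiv.symm_apply_apply] using hxy
  set A : Fin k → Set M := fun i => B i \ ⋃ j : {j : Fin k // j < i}, B j.1 with hA
  have hBmeas : ∀ i, MeasurableSet (B i) := fun i => measurableSet_ball
  have hAmeas : ∀ i, MeasurableSet (A i) := by
    intro i
    exact (hBmeas i).diff (MeasurableSet.iUnion fun j => hBmeas j.1)
  have hAsubB : ∀ i, A i ⊆ B i := fun i => diff_subset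
  refine ⟨k, A, hAmeas, ?_, ?_, ?_, ?_⟩
  · -- disjoint
    intro i j hij
    rcases hij.lt_or_gt with h | h
    · refine Set.disjoint_left.mpr fun x hxi hxj => ?_
      exact hxj.2 (mem_iUnion.mpr ⟨⟨i, h⟩, hxi.1⟩)
    · refine Set.disjoint_left.mpr fun x hxi hxj => ?_
      exact hxi.2 (mem_iUnion.mpr ⟨⟨j, h⟩, hxj.1⟩)
  · -- union
    apply eq_univ_of_univ_subset
    intro x hx
    have hxB : x ∈ ⋃ i, B i := hcoverB ▸ mem_univ x
    obtain ⟨i, hi⟩ := mem_iUnion.mp hxB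
    obtain ⟨i₀, hi₀S, hmin⟩ := Set.exists_min_image {j : Fin k | x ∈ B j} id (Set.toFinite _)
      ⟨i, hi⟩
    refine mem_iUnion.mpr ⟨i₀, hi₀S, fun hmem => ?_⟩
    obtain ⟨j, hj⟩ := mem_iUnion.mp hmem
    exact absurd (hmin j.1 hj) (not_le.mpr j.2)
  · -- null frontiers
    intro i
    have hsub : frontier (A i) ⊆ (frontier (B i)) ∪ ⋃ j, frontier (B j) := by
      refine (frontier_diff_subset' _ _).trans (union_subset_union subset_rfl ?_)
      refine (frontier_iUnion_subset' _).trans ?_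
      exact iUnion_subset fun j => subset_iUnion (fun j : Fin k => frontier (B j)) j.1
    refine measure_mono_null hsub ?_
    refine measure_union_null (hrad2 _) (measure_iUnion_null fun j => hrad2 _)
  · -- diameter
    intro i x hx y hy
    have hxB := hAsubB i hx
    have hyB := hAsubB i hy
    rw [hB, mem_ball] at hxB hyB
    have hrlt := (hrad1 (e.symm i : M)).2
    calc dist x y ≤ dist x (e.symm i : M) + dist (e.symm i : M) y := dist_triangle _ _ _
    _ = dist x (e.symm i : M) + dist y (e.symm i : M) := by rw [dist_comm (e.symm i : M) y]
    _ ≤ δ/2 + δ/2 := by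
        have h1 : dist x (e.symm i : M) ≤ δ/2 := le_of_lt (hxB.trans_le hrlt.le)
        have h2 : dist y (e.symm i : M) ≤ δ/2 := le_of_lt (hyB.trans_le hrlt.le)
        linarith
    _ = δ := by ring
end partition

lemma isFiniteMeasure_of_le_one {X : Type*} [MeasurableSpace X] (ρ : Measure X)
    (h : ρ univ ≤ 1) : IsFiniteMeasure ρ :=
  ⟨lt_of_le_of_lt h ENNReal.one_lt_top⟩

/-- normalized restriction -/
noncomputable def piece (P : Measure M) (A : Set M) : Measure M := (P A)⁻¹ • P.restrict A

lemma piece_univ_le (P : Measure M) [IsFiniteMeasure P] (A : Set M) : piece P A univ ≤ 1 := by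
  rw [piece, Measure.smul_apply, Measure.restrict_apply_univ, smul_eq_mul]
  rcases eq_or_ne (P A) 0 with h | h
  · simp [h]
  · rw [ENNReal.inv_mul_cancel h (measure_ne_top P A)]

instance piece.instIsFiniteMeasure (P : Measure M) [IsFiniteMeasure P] (A : Set M) :
    IsFiniteMeasure (piece P A) :=
  isFiniteMeasure_of_le_one _ (piece_univ_le P A)

lemma piece_univ (P : Measure M) [IsFiniteMeasure P] {A : Set M} (h : P A ≠ 0) :
    piece P A univ = 1 := by
  rw [piece, Measure.smul_apply, Measure.restrict_apply_univ, smul_eq_mul,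
    ENNReal.inv_mul_cancel h (measure_ne_top P A)]

lemma smul_piece (P : Measure M) [IsFiniteMeasure P] (A : Set M) :
    P A • piece P A = P.restrict A := by
  rcases eq_or_ne (P A) 0 with h | h
  · rw [h, zero_smul, eq_comm, Measure.restrict_eq_zero]; exact h
  · rw [piece, smul_smul, ENNReal.mul_inv_cancel h (measure_ne_top P A), one_smul]

lemma piece_compl (P : Measure M) {A : Set M} (hA : MeasurableSet A) : piece P A Aᶜ = 0 := by
  rw [piece, Measure.smul_apply, Measure.restrict_apply hA.compl, compl_inter_self,
    measure_empty, smul_eq_mul, mul_zero]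

lemma map_finset_sum {ι α β : Type*} [MeasurableSpace α] [MeasurableSpace β] {f : α → β}
    (hf : Measurable f) (s : Finset ι) (μ : ι → Measure α) :
    (∑ i ∈ s, μ i).map f = ∑ i ∈ s, (μ i).map f := by
  induction s using Finset.cons_induction with
  | empty => simp
  | cons i s hi ih => rw [Finset.sum_cons, Measure.map_add _ _ hf, ih, Finset.sum_cons]

lemma cost_le_mass (ρ : Measure (M × M)) [IsFiniteMeasure ρ] :
    cost ρ ≤ D M ^ 2 * (ρ univ).toReal := by
  calc cost ρ ≤ ∫ _p, D M ^ 2 ∂ρ := by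
        refine integral_mono (cost_integrable ρ) (integrable_const _) fun p => ?_
        exact pow_le_pow_left₀ dist_nonneg (dist_le_D _ _) 2
  _ = D M ^ 2 * (ρ univ).toReal := by rw [integral_const, smul_eq_mul, mul_comm]; rfl

lemma cost_prod_le (X Y : Measure M) [IsFiniteMeasure X] [IsFiniteMeasure Y]
    {S : Set M} (hX : X Sᶜ = 0) (hY : Y Sᶜ = 0) {δ : ℝ} (hδ : 0 ≤ δ)
    (hdiam : ∀ x ∈ S, ∀ y ∈ S, dist x y ≤ δ) (hmX : X univ ≤ 1) (hmY : Y univ ≤ 1) :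
    cost (X.prod Y) ≤ δ ^ 2 := by
  have hnull : (X.prod Y) ((S ×ˢ S)ᶜ) = 0 := by
    have hsub : (S ×ˢ S)ᶜ ⊆ (Sᶜ ×ˢ univ) ∪ (univ ×ˢ Sᶜ) := by
      intro p hp
      simp only [Set.mem_compl_iff, Set.mem_prod, not_and_or] at hp
      rcases hp with h | h
      · exact Or.inl ⟨h, mem_univ _⟩
      · exact Or.inr ⟨mem_univ _, h⟩
    refine measure_mono_null hsub (measure_union_null ?_ ?_) <;>
      rw [Measure.prod_prod] <;> simp [hX, hY]
  have hae : ∀ᵐ p ∂(X.prod Y), dist p.1 p.2 ^ 2 ≤ δ ^ 2 := by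
    rw [ae_iff]
    refine measure_mono_null (fun p hp => ?_) hnull
    simp only [mem_setOf_eq, not_le] at hp
    intro hmem
    obtain ⟨h1, h2⟩ := hmem
    exact absurd (pow_le_pow_left₀ dist_nonneg (hdiam _ h1 _ h2) 2) (not_le.mpr hp)
  calc cost (X.prod Y) ≤ ∫ _p, δ ^ 2 ∂(X.prod Y) :=
        integral_mono_ae (cost_integrable _) (integrable_const _) hae
  _ = δ ^ 2 * ((X.prod Y) univ).toReal := by rw [integral_const, smul_eq_mul, mul_comm]; rfl
  _ ≤ δ ^ 2 * 1 := by
      have hm : (X.prod Y) univ ≤ 1 := by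
        rw [← Set.univ_prod_univ, Measure.prod_prod]
        exact mul_le_one' hmX hmY
      have := ENNReal.toReal_mono ENNReal.one_ne_top hm
      simp only [ENNReal.toReal_one] at this
      exact mul_le_mul_of_nonneg_left this (by positivity)
  _ = δ ^ 2 := mul_one _

lemma W2sq_le_partition_bound (P Q : Measure M) [IsProbabilityMeasure P] [IsProbabilityMeasure Q]
    {k : ℕ} {A : Fin k → Set M}
    (hmeas : ∀ i, MeasurableSet (A i)) (hdisj : Pairwise (Function.onFun Disjoint A))
    (huniv : (⋃ i, A i) = univ) {δ : ℝ} (hδ : 0 ≤ δ)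
    (hdiam : ∀ i, ∀ x ∈ A i, ∀ y ∈ A i, dist x y ≤ δ) :
    W2sq P Q ≤ δ ^ 2 + D M ^ 2 * (1 - ∑ i, min (P (A i)) (Q (A i))).toReal := by
  classical
  set a : Fin k → ℝ≥0∞ := fun i => P (A i) with ha
  set b : Fin k → ℝ≥0∞ := fun i => Q (A i) with hb
  set c : Fin k → ℝ≥0∞ := fun i => min (a i) (b i) with hc
  have hane : ∀ i, a i ≠ ∞ := fun i => measure_ne_top P (A i)
  have hbne : ∀ i, b i ≠ ∞ := fun i => measure_ne_top Q (A i)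
  have hcle_a : ∀ i, c i ≤ a i := fun i => min_le_left _ _
  have hcle_b : ∀ i, c i ≤ b i := fun i => min_le_right _ _
  have hsum_a : ∑ i, a i = 1 := by
    calc ∑ i, a i = ∑' i, P (A i) := (tsum_fintype _).symm
    _ = P (⋃ i, A i) := (measure_iUnion hdisj hmeas).symm
    _ = 1 := by rw [huniv, measure_univ]
  have hsum_b : ∑ i, b i = 1 := by
    calc ∑ i, b i = ∑' i, Q (A i) := (tsum_fintype _).symm
    _ = Q (⋃ i, A i) := (measure_iUnion hdisj hmeas).symm
    _ = 1 := by rw [huniv, measure_univ]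
  have hsum_c_le : ∑ i, c i ≤ 1 := hsum_b ▸ Finset.sum_le_sum (fun i _ => hcle_b i)
  set r : ℝ≥0∞ := 1 - ∑ i, c i with hr
  have hr_le : r ≤ 1 := tsub_le_self
  have hr_ne : r ≠ ∞ := (hr_le.trans_lt ENNReal.one_lt_top).ne
  have hsumc_ne : (∑ i, c i) ≠ ∞ := (hsum_c_le.trans_lt ENNReal.one_lt_top).ne
  set PP : Fin k → Measure M := fun i => piece P (A i) with hPP
  set QQ : Fin k → Measure M := fun i => piece Q (A i) with hQQ
  set Pr : Measure M := ∑ i, (a i - c i) • PP i with hPrdef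
  set Qr : Measure M := ∑ i, (b i - c i) • QQ i with hQrdef
  have hsub_a : ∑ i, (a i - c i) = r := by
    have hadd : (∑ i, (a i - c i)) + ∑ i, c i = 1 := by
      rw [← Finset.sum_add_distrib,
        Finset.sum_congr rfl (fun i _ => tsub_add_cancel_of_le (hcle_a i))]
      exact hsum_a
    exact ENNReal.eq_sub_of_add_eq hsumc_ne hadd
  have hsub_b : ∑ i, (b i - c i) = r := by
    have hadd : (∑ i, (b i - c i)) + ∑ i, c i = 1 := by
      rw [← Finset.sum_add_distrib,
        Finset.sum_congr rfl (fun i _ => tsub_add_cancel_of_le (hcle_b i))]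
      exact hsum_b
    exact ENNReal.eq_sub_of_add_eq hsumc_ne hadd
  have hPr_univ : Pr univ = r := by
    rw [hPrdef, Measure.finset_sum_apply]
    rw [Finset.sum_congr rfl (fun i _ => ?_)]
    · exact hsub_a
    · rw [Measure.smul_apply, smul_eq_mul]
      rcases eq_or_ne (a i) 0 with h0 | h0
      · have hc0 : c i = 0 := le_antisymm (h0 ▸ hcle_a i) zero_le
        rw [h0, hc0]; simp
      · rw [hPP]
        simp only []
        rw [piece_univ P h0, mul_one]
  have hQr_univ : Qr univ = r := by
    rw [hQrdef, Measure.finset_sum_apply]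
    rw [Finset.sum_congr rfl (fun i _ => ?_)]
    · exact hsub_b
    · rw [Measure.smul_apply, smul_eq_mul]
      rcases eq_or_ne (b i) 0 with h0 | h0
      · have hc0 : c i = 0 := le_antisymm (h0 ▸ hcle_b i) zero_le
        rw [h0, hc0]; simp
      · rw [hQQ]
        simp only []
        rw [piece_univ Q h0, mul_one]
  haveI hPrfin : IsFiniteMeasure Pr := isFiniteMeasure_of_le_one _ (hPr_univ ▸ hr_le)
  haveI hQrfin : IsFiniteMeasure Qr := isFiniteMeasure_of_le_one _ (hQr_univ ▸ hr_le)
  set γ : Measure (M × M) := (∑ i, c i • ((PP i).prod (QQ i))) + r⁻¹ • (Pr.prod Qr) with hγdef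
  have hPsum : ∑ i, a i • PP i = P := by
    rw [Finset.sum_congr rfl (fun i _ => smul_piece P (A i))]
    rw [← Measure.sum_fintype, ← Measure.restrict_iUnion hdisj hmeas, huniv,
      Measure.restrict_univ]
  have hQsum : ∑ i, b i • QQ i = Q := by
    rw [Finset.sum_congr rfl (fun i _ => smul_piece Q (A i))]
    rw [← Measure.sum_fintype, ← Measure.restrict_iUnion hdisj hmeas, huniv,
      Measure.restrict_univ]
  have hrem : ∀ (X : Measure M), (r⁻¹ * r) • X = (1 : ℝ≥0∞) • X ∨ r = 0 := by
    intro X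
    rcases eq_or_ne r 0 with h | h
    · exact Or.inr h
    · exact Or.inl (by rw [ENNReal.inv_mul_cancel h hr_ne])
  have hceq_of_r0 : r = 0 → ∀ i, c i = a i := by
    intro hr0 i
    have h0 : ∑ j, (a j - c j) = 0 := hsub_a.trans hr0
    have := Finset.sum_eq_zero_iff.mp h0 i (Finset.mem_univ i)
    exact le_antisymm (hcle_a i) (tsub_eq_zero_iff_le.mp this)
  have hmapfst : γ.map Prod.fst = P := by
    rw [hγdef, Measure.map_add _ _ measurable_fst, map_finset_sum measurable_fst,
      Measure.map_smul]
    have hterm : ∀ i ∈ Finset.univ, (c i • ((PP i).prod (QQ i))).map Prod.fst = c i • PP i := by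
      intro i _
      rw [Measure.map_smul, Measure.map_fst_prod]
      rcases eq_or_ne (b i) 0 with h0 | h0
      · have hc0 : c i = 0 := le_antisymm (h0 ▸ hcle_b i) zero_le
        rw [hc0, zero_smul, zero_smul]
      · rw [hQQ]
        simp only []
        rw [piece_univ Q h0, one_smul]
    rw [Finset.sum_congr rfl hterm, Measure.map_fst_prod, hQr_univ]
    rcases eq_or_ne r 0 with hr0 | hr0
    · have hPr0 : Pr = 0 := by
        have := hPr_univ.trans hr0
        exact Measure.measure_univ_eq_zero.mp this
      rw [hr0, zero_smul, smul_zero, add_zero]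
      rw [Finset.sum_congr rfl (fun i _ => by rw [hceq_of_r0 hr0 i])]
      exact hPsum
    · rw [smul_smul, ENNReal.inv_mul_cancel hr0 hr_ne, one_smul, hPrdef,
        ← Finset.sum_add_distrib]
      rw [Finset.sum_congr rfl (fun i _ => ?_)]
      · exact hPsum
      · rw [← add_smul, add_tsub_cancel_of_le (hcle_a i)]
  have hmapsnd : γ.map Prod.snd = Q := by
    rw [hγdef, Measure.map_add _ _ measurable_snd, map_finset_sum measurable_snd,
      Measure.map_smul]
    have hterm : ∀ i ∈ Finset.univ, (c i • ((PP i).prod (QQ i))).map Prod.snd = c i • QQ i := by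
      intro i _
      rw [Measure.map_smul, Measure.map_snd_prod]
      rcases eq_or_ne (a i) 0 with h0 | h0
      · have hc0 : c i = 0 := le_antisymm (h0 ▸ hcle_a i) zero_le
        rw [hc0, zero_smul, zero_smul]
      · rw [hPP]
        simp only []
        rw [piece_univ P h0, one_smul]
    rw [Finset.sum_congr rfl hterm, Measure.map_snd_prod, hPr_univ]
    rcases eq_or_ne r 0 with hr0 | hr0
    · have hQr0 : Qr = 0 := by
        have := hQr_univ.trans hr0
        exact Measure.measure_univ_eq_zero.mp this
      rw [hr0, zero_smul, smul_zero, add_zero]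
      have hceqb : ∀ i, c i = b i := by
        intro i
        have h0 : ∑ j, (b j - c j) = 0 := hsub_b.trans hr0
        have := Finset.sum_eq_zero_iff.mp h0 i (Finset.mem_univ i)
        exact le_antisymm (hcle_b i) (tsub_eq_zero_iff_le.mp this)
      rw [Finset.sum_congr rfl (fun i _ => by rw [hceqb i])]
      exact hQsum
    · rw [smul_smul, ENNReal.inv_mul_cancel hr0 hr_ne, one_smul, hQrdef,
        ← Finset.sum_add_distrib]
      rw [Finset.sum_congr rfl (fun i _ => ?_)]
      · exact hQsum
      · rw [← add_smul, add_tsub_cancel_of_le (hcle_b i)]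
  -- cost estimate
  have hmassi : ∀ i, (c i • ((PP i).prod (QQ i))) univ ≤ 1 := by
    intro i
    rw [Measure.smul_apply, smul_eq_mul, ← Set.univ_prod_univ, Measure.prod_prod]
    calc c i * (PP i univ * QQ i univ) ≤ 1 * (1 * 1) := by
          refine mul_le_mul' ((hcle_b i).trans (hsum_b ▸ Finset.single_le_sum
            (fun j _ => zero_le) (Finset.mem_univ i))) ?_
          exact mul_le_mul' (piece_univ_le P (A i)) (piece_univ_le Q (A i))
    _ = 1 := by simp
  have hfini : ∀ i, IsFiniteMeasure (c i • ((PP i).prod (QQ i))) :=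
    fun i => isFiniteMeasure_of_le_one _ (hmassi i)
  have hmassrem : (r⁻¹ • (Pr.prod Qr)) univ ≤ 1 := by
    rw [Measure.smul_apply, smul_eq_mul, ← Set.univ_prod_univ, Measure.prod_prod,
      hPr_univ, hQr_univ]
    rcases eq_or_ne r 0 with hr0 | hr0
    · rw [hr0]; simp
    · rw [← mul_assoc, ENNReal.inv_mul_cancel hr0 hr_ne, one_mul]; exact hr_le
  haveI hfinrem : IsFiniteMeasure (r⁻¹ • (Pr.prod Qr)) := isFiniteMeasure_of_le_one _ hmassrem
  have hint_i : ∀ i ∈ Finset.univ, Integrable (fun p : M × M => dist p.1 p.2 ^ 2)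
      (c i • ((PP i).prod (QQ i))) := by
    intro i _
    haveI := hfini i
    exact cost_integrable _
  haveI hfinsum : IsFiniteMeasure (∑ i, c i • ((PP i).prod (QQ i))) := by
    constructor
    rw [Measure.finset_sum_apply]
    calc ∑ i, (c i • ((PP i).prod (QQ i))) univ
        ≤ ∑ i : Fin k, (c i * 1) := by
          refine Finset.sum_le_sum fun i _ => ?_
          rw [Measure.smul_apply, smul_eq_mul]
          refine mul_le_mul_right ?_ _
          rw [← Set.univ_prod_univ, Measure.prod_prod]
          exact (mul_le_mul' (piece_univ_le P (A i)) (piece_univ_le Q (A i))).trans (by simp)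
    _ = ∑ i, c i := by simp
    _ < ∞ := hsumc_ne.lt_top
  have hcost : cost γ ≤ δ ^ 2 + D M ^ 2 * r.toReal := by
    have e1 : cost γ = (∑ i, ∫ p : M × M, dist p.1 p.2 ^ 2 ∂(c i • ((PP i).prod (QQ i))))
        + ∫ p : M × M, dist p.1 p.2 ^ 2 ∂(r⁻¹ • (Pr.prod Qr)) := by
      rw [hγdef]
      unfold cost
      rw [integral_add_measure (integrable_finset_sum_measure.mpr hint_i) (cost_integrable _),
        integral_finset_sum_measure hint_i]
    rw [e1]
    have hterm : ∀ i, ∫ p : M × M, dist p.1 p.2 ^ 2 ∂(c i • ((PP i).prod (QQ i)))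
        ≤ (c i).toReal * δ ^ 2 := by
      intro i
      rw [integral_smul_measure, smul_eq_mul]
      refine mul_le_mul_of_nonneg_left ?_ ENNReal.toReal_nonneg
      exact cost_prod_le (PP i) (QQ i) (piece_compl P (hmeas i)) (piece_compl Q (hmeas i)) hδ
        (hdiam i) (piece_univ_le P (A i)) (piece_univ_le Q (A i))
    have hsum_term : (∑ i, ∫ p : M × M, dist p.1 p.2 ^ 2 ∂(c i • ((PP i).prod (QQ i))))
        ≤ δ ^ 2 := by
      calc _ ≤ ∑ i, (c i).toReal * δ ^ 2 := Finset.sum_le_sum fun i _ => hterm i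
      _ = (∑ i, (c i).toReal) * δ ^ 2 := by rw [Finset.sum_mul]
      _ ≤ 1 * δ ^ 2 := by
          refine mul_le_mul_of_nonneg_right ?_ (by positivity)
          have := ENNReal.toReal_mono ENNReal.one_ne_top hsum_c_le
          rwa [ENNReal.toReal_sum (fun i _ => ((hcle_b i).trans_lt (hbne i).lt_top).ne),
            ENNReal.toReal_one] at this
      _ = δ ^ 2 := one_mul _
    have hrem_term : ∫ p : M × M, dist p.1 p.2 ^ 2 ∂(r⁻¹ • (Pr.prod Qr))
        ≤ D M ^ 2 * r.toReal := by
      rw [integral_smul_measure, smul_eq_mul]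
      have hmass : (Pr.prod Qr) univ = r * r := by
        rw [← Set.univ_prod_univ, Measure.prod_prod, hPr_univ, hQr_univ]
      haveI : IsFiniteMeasure (Pr.prod Qr) := isFiniteMeasure_of_le_one _
        (by rw [hmass]; exact (mul_le_mul' hr_le hr_le).trans (by simp))
      have h1 : cost (Pr.prod Qr) ≤ D M ^ 2 * (r * r).toReal := by
        have := cost_le_mass (Pr.prod Qr)
        rwa [hmass] at this
      rcases eq_or_ne r 0 with hr0 | hr0
      · have : cost (Pr.prod Qr) ≤ 0 := by
          rw [hr0] at h1; simpa using h1
        calc (r⁻¹).toReal * cost (Pr.prod Qr) ≤ (r⁻¹).toReal * 0 :=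
              mul_le_mul_of_nonneg_left this ENNReal.toReal_nonneg
        _ = 0 := mul_zero _
        _ ≤ D M ^ 2 * r.toReal := by positivity
      · calc (r⁻¹).toReal * cost (Pr.prod Qr) ≤ (r⁻¹).toReal * (D M ^ 2 * (r * r).toReal) :=
              mul_le_mul_of_nonneg_left h1 ENNReal.toReal_nonneg
        _ = D M ^ 2 * ((r⁻¹).toReal * (r * r).toReal) := by ring
        _ = D M ^ 2 * r.toReal := by
            rw [← ENNReal.toReal_mul, ← mul_assoc, ENNReal.inv_mul_cancel hr0 hr_ne, one_mul]
    calc _ ≤ δ ^ 2 + ∫ p : M × M, dist p.1 p.2 ^ 2 ∂(r⁻¹ • (Pr.prod Qr)) := by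
          exact add_le_add_left hsum_term _
    _ ≤ δ ^ 2 + D M ^ 2 * r.toReal := add_le_add_right hrem_term _
  exact (W2sq_le_cost ⟨hmapfst, hmapsnd⟩).trans hcost


lemma sum_measure_partition (Q : Measure M) [IsProbabilityMeasure Q] {k : ℕ} {A : Fin k → Set M}
    (hmeas : ∀ i, MeasurableSet (A i)) (hdisj : Pairwise (Function.onFun Disjoint A))
    (huniv : (⋃ i, A i) = univ) : ∑ i, Q (A i) = 1 := by
  calc ∑ i, Q (A i) = ∑' i, Q (A i) := (tsum_fintype _).symm
  _ = Q (⋃ i, A i) := (measure_iUnion hdisj hmeas).symm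
  _ = 1 := by rw [huniv, measure_univ]

lemma tendsto_W2sq_zero (μs : ℕ → ProbabilityMeasure M) (μ : ProbabilityMeasure M)
    (h : Tendsto μs atTop (nhds μ)) :
    Tendsto (fun n => W2sq (μs n : Measure M) (μ : Measure M)) atTop (nhds 0) := by
  rw [NormedAddCommGroup.tendsto_nhds_zero]
  intro ε hε
  have hhalf : (0:ℝ) < ε / 2 := by linarith
  have hδpos : 0 < Real.sqrt (ε / 2) := Real.sqrt_pos.mpr hhalf
  obtain ⟨k, A, hmeas, hdisj, huniv, hfront, hdiam⟩ :=
    exists_partition (Q := (μ : Measure M)) hδpos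
  -- convergence of masses
  have hmass : ∀ i, Tendsto (fun n => ((μs n (A i) : ℝ≥0) : ℝ)) atTop
      (nhds ((μ (A i) : ℝ≥0) : ℝ)) := by
    intro i
    have hnull : μ (frontier (A i)) = 0 := by
      have : ((μ (frontier (A i)) : ℝ≥0) : ℝ≥0∞) = 0 := by
        rw [ProbabilityMeasure.ennreal_coeFn_eq_coeFn_toMeasure]
        exact hfront i
      exact_mod_cast this
    exact NNReal.tendsto_coe.mpr
      (ProbabilityMeasure.tendsto_measure_of_null_frontier_of_tendsto h hnull)
  set sre : ℕ → ℝ := fun n => ∑ i, min ((μs n (A i) : ℝ≥0) : ℝ) ((μ (A i) : ℝ≥0) : ℝ)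
    with hsre
  have hcoe : ∀ (ν : ProbabilityMeasure M) (s : Set M),
      ((ν s : ℝ≥0) : ℝ) = ((ν : Measure M) s).toReal := by
    intro ν s
    rw [← ProbabilityMeasure.ennreal_coeFn_eq_coeFn_toMeasure, ENNReal.coe_toReal]
  have hsum1 : ∑ i, ((μ (A i) : ℝ≥0) : ℝ) = 1 := by
    have := sum_measure_partition (μ : Measure M) hmeas hdisj huniv
    have h2 : (∑ i, (μ : Measure M) (A i)).toReal = 1 := by rw [this]; simp
    rw [ENNReal.toReal_sum (fun i _ => measure_ne_top _ _)] at h2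
    rw [← h2]
    exact Finset.sum_congr rfl fun i _ => hcoe μ (A i)
  have htend : Tendsto sre atTop (nhds 1) := by
    have : Tendsto sre atTop (nhds (∑ i, min ((μ (A i) : ℝ≥0) : ℝ) ((μ (A i) : ℝ≥0) : ℝ))) :=
      tendsto_finset_sum _ (fun i _ => (hmass i).min tendsto_const_nhds)
    simpa [min_self, hsum1] using this
  set ε2 : ℝ := ε / (2 * (D M ^ 2 + 1)) with hε2
  have hDpos : (0:ℝ) < D M ^ 2 + 1 := by positivity
  have hε2pos : 0 < ε2 := by positivity
  have hev : ∀ᶠ n in atTop, sre n > 1 - ε2 := htend (Ioi_mem_nhds (by linarith))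
  filter_upwards [hev] with n hn
  -- bound
  have hb := W2sq_le_partition_bound (μs n : Measure M) (μ : Measure M) hmeas hdisj huniv
    (Real.sqrt_nonneg (ε/2)) hdiam
  rw [Real.sq_sqrt hhalf.le] at hb
  -- identify the toReal term
  have hSle : (∑ i, min ((μs n : Measure M) (A i)) ((μ : Measure M) (A i))) ≤ 1 := by
    calc _ ≤ ∑ i, (μ : Measure M) (A i) := Finset.sum_le_sum fun i _ => min_le_right _ _
    _ = 1 := sum_measure_partition (μ : Measure M) hmeas hdisj huniv
  have hterm : (1 - ∑ i, min ((μs n : Measure M) (A i)) ((μ : Measure M) (A i))).toReal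
      = 1 - sre n := by
    rw [ENNReal.toReal_sub_of_le hSle ENNReal.one_ne_top, ENNReal.toReal_one,
      ENNReal.toReal_sum (fun i _ => ((min_le_right _ _).trans_lt
        (measure_lt_top (μ : Measure M) (A i))).ne)]
    congr 1
    refine Finset.sum_congr rfl fun i _ => ?_
    rw [ENNReal.toReal_min (measure_ne_top _ _) (measure_ne_top _ _),
      ← hcoe (μs n) (A i), ← hcoe μ (A i)]
  rw [hterm] at hb
  have hfinal : W2sq (μs n : Measure M) (μ : Measure M) < ε := by
    have h1 : 1 - sre n < ε2 := by linarith
    have hnonneg : 0 ≤ 1 - sre n := by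
      have hsle : sre n ≤ 1 := by
        calc sre n ≤ ∑ i, ((μ (A i) : ℝ≥0) : ℝ) :=
              Finset.sum_le_sum fun i _ => min_le_right _ _
        _ = 1 := hsum1
      linarith
    calc W2sq (μs n : Measure M) (μ : Measure M) ≤ ε/2 + D M ^ 2 * (1 - sre n) := hb
    _ ≤ ε/2 + (D M ^2 + 1) * (1 - sre n) := by nlinarith
    _ < ε/2 + (D M ^2 + 1) * ε2 := by
        have := mul_lt_mul_of_pos_left h1 hDpos
        linarith
    _ = ε/2 + ε/2 := by
        rw [hε2]; field_simp
    _ = ε := by ring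
  rw [Real.norm_of_nonneg (W2sq_nonneg _ _)]
  exact hfinal


end bigpart

section final
variable {M : Type*} [MetricSpace M] [CompactSpace M] [Nonempty M] [MeasurableSpace M]
  [BorelSpace M]

lemma continuous_W2sq_left (ν0 : ProbabilityMeasure M) :
    Continuous (fun μ' : ProbabilityMeasure M => W2sq (μ' : Measure M) (ν0 : Measure M)) := by
  refine SeqContinuous.continuous ?_
  intro x x₀ hx
  set t : ℕ → ℝ := fun n => W2sq (x n : Measure M) (x₀ : Measure M) with htdef
  have ht : Tendsto t atTop (nhds 0) := tendsto_W2sq_zero x x₀ hx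
  have hsq : Tendsto (fun n => Real.sqrt (t n)) atTop (nhds 0) := by
    have := (Real.continuous_sqrt.tendsto 0).comp ht
    simpa [Real.sqrt_zero, Function.comp_def] using this
  set e : ℕ → ℝ := fun n => 2 * D M * Real.sqrt (t n) + t n with hedef
  have he : Tendsto e atTop (nhds 0) := by
    have := (hsq.const_mul (2 * D M)).add ht
    simpa using this
  set g := fun μ' : ProbabilityMeasure M => W2sq (μ' : Measure M) (ν0 : Measure M) with hgdef
  have hub : ∀ n, g (x n) ≤ g x₀ + e n := by
    intro n
    have h3 := W2sq_le_add (ν0 : Measure M) (x₀ : Measure M) (x n : Measure M)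
    rw [W2sq_comm (ν0 : Measure M) (x₀ : Measure M),
      W2sq_comm (ν0 : Measure M) (x n : Measure M),
      W2sq_comm (x₀ : Measure M) (x n : Measure M)] at h3
    exact h3.trans_eq (by rw [hedef])
  have hlb : ∀ n, g x₀ - e n ≤ g (x n) := by
    intro n
    have h8 := W2sq_le_add (ν0 : Measure M) (x n : Measure M) (x₀ : Measure M)
    rw [W2sq_comm (ν0 : Measure M) (x₀ : Measure M),
      W2sq_comm (ν0 : Measure M) (x n : Measure M)] at h8
    have : g x₀ ≤ g (x n) + e n := h8.trans_eq (by rw [hedef])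
    linarith
  have hA : Tendsto (fun n => g x₀ - e n) atTop (nhds (g x₀)) := by
    simpa using tendsto_const_nhds.sub he
  have hB : Tendsto (fun n => g x₀ + e n) atTop (nhds (g x₀)) := by
    simpa using tendsto_const_nhds.add he
  exact tendsto_of_tendsto_of_tendsto_of_le_of_le hA hB hlb hub

end final
end W2aux

open W2aux in
/-- Stability of Wasserstein barycenters: if `Ω_N → Ω` weakly-* on `P(M)` (`M` compact),
`μ̄_N` is a `W₂`-barycenter of `Ω_N` and `μ̄_N → μ̄` weakly-*, then `μ̄` is a
`W₂`-barycenter of `Ω`. -/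
theorem wasserstein_barycenter_stability {M : Type*} [MetricSpace M] [CompactSpace M] [Nonempty M]
    [MeasurableSpace M] [BorelSpace M]
    [MeasurableSpace (ProbabilityMeasure M)] [BorelSpace (ProbabilityMeasure M)]
    (Ωs : ℕ → ProbabilityMeasure (ProbabilityMeasure M))
    (Ω : ProbabilityMeasure (ProbabilityMeasure M))
    (hconv : Tendsto Ωs atTop (nhds Ω))
    (μbs : ℕ → ProbabilityMeasure M)
    (hbc : ∀ N, ∀ ν : ProbabilityMeasure M,
      ∫ μ, W2sq (μ : Measure M) (μbs N : Measure M) ∂(Ωs N : Measure (ProbabilityMeasure M)) ≤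
      ∫ μ, W2sq (μ : Measure M) (ν : Measure M) ∂(Ωs N : Measure (ProbabilityMeasure M)))
    (μb : ProbabilityMeasure M) (hlim : Tendsto μbs atTop (nhds μb)) :
    ∀ ν : ProbabilityMeasure M,
      ∫ μ, W2sq (μ : Measure M) (μb : Measure M) ∂(Ω : Measure (ProbabilityMeasure M)) ≤
      ∫ μ, W2sq (μ : Measure M) (ν : Measure M) ∂(Ω : Measure (ProbabilityMeasure M)) := by
  intro ν
  set g : ProbabilityMeasure M → ℝ := fun μ' => W2sq (μ' : Measure M) (μb : Measure M) with hgdef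
  set hfun : ProbabilityMeasure M → ℝ := fun μ' => W2sq (μ' : Measure M) (ν : Measure M)
    with hhdef
  have hgc : Continuous g := continuous_W2sq_left μb
  have hhc : Continuous hfun := continuous_W2sq_left ν
  have hgb : ∀ μ' : ProbabilityMeasure M, 0 ≤ g μ' ∧ g μ' ≤ D M ^ 2 := fun μ' =>
    ⟨W2sq_nonneg _ _, W2sq_le_D_sq _ _⟩
  have hhb : ∀ μ' : ProbabilityMeasure M, 0 ≤ hfun μ' ∧ hfun μ' ≤ D M ^ 2 := fun μ' =>
    ⟨W2sq_nonneg _ _, W2sq_le_D_sq _ _⟩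
  set G : ProbabilityMeasure M →ᵇ ℝ := BoundedContinuousFunction.mkOfBound ⟨g, hgc⟩ (D M ^ 2)
    (fun a b => by
      rw [Real.dist_eq, abs_le]
      obtain ⟨ha1, ha2⟩ := hgb a; obtain ⟨hb1, hb2⟩ := hgb b
      constructor <;> simp only [ContinuousMap.coe_mk] <;> linarith) with hGdef
  set H : ProbabilityMeasure M →ᵇ ℝ := BoundedContinuousFunction.mkOfBound ⟨hfun, hhc⟩ (D M ^ 2)
    (fun a b => by
      rw [Real.dist_eq, abs_le]
      obtain ⟨ha1, ha2⟩ := hhb a; obtain ⟨hb1, hb2⟩ := hhb b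
      constructor <;> simp only [ContinuousMap.coe_mk] <;> linarith) with hHdef
  have hGint := MeasureTheory.ProbabilityMeasure.tendsto_iff_forall_integral_tendsto.mp hconv G
  have hHint := MeasureTheory.ProbabilityMeasure.tendsto_iff_forall_integral_tendsto.mp hconv H
  have hGcoe : ∀ μ' : ProbabilityMeasure M, G μ' = g μ' := fun _ => rfl
  have hHcoe : ∀ μ' : ProbabilityMeasure M, H μ' = hfun μ' := fun _ => rfl
  simp only [hGcoe] at hGint
  simp only [hHcoe] at hHint
  -- error terms
  set t : ℕ → ℝ := fun N => W2sq (μbs N : Measure M) (μb : Measure M) with htdef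
  have htt : Tendsto t atTop (nhds 0) := tendsto_W2sq_zero μbs μb hlim
  have hsq : Tendsto (fun N => Real.sqrt (t N)) atTop (nhds 0) := by
    have := (Real.continuous_sqrt.tendsto 0).comp htt
    simpa [Real.sqrt_zero, Function.comp_def] using this
  set e : ℕ → ℝ := fun N => 2 * D M * Real.sqrt (t N) + t N with hedef
  have het : Tendsto e atTop (nhds 0) := by
    have := (hsq.const_mul (2 * D M)).add htt
    simpa using this
  have hcomp : ∀ (N : ℕ) (μ' : ProbabilityMeasure M),
      g μ' ≤ W2sq (μ' : Measure M) (μbs N : Measure M) + e N := by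
    intro N μ'
    have := W2sq_le_add (μ' : Measure M) (μbs N : Measure M) (μb : Measure M)
    exact this.trans_eq (by rw [hedef])
  have key : ∀ N, (∫ μ', g μ' ∂(Ωs N : Measure (ProbabilityMeasure M))) - e N
      ≤ ∫ μ', hfun μ' ∂(Ωs N : Measure (ProbabilityMeasure M)) := by
    intro N
    have hint1 : Integrable (fun μ' : ProbabilityMeasure M =>
        W2sq (μ' : Measure M) (μbs N : Measure M)) (Ωs N : Measure (ProbabilityMeasure M)) := by
      refine bdd_cont_integrable _ (continuous_W2sq_left (μbs N)) (D M ^ 2) fun μ' => ?_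
      rw [abs_of_nonneg (W2sq_nonneg _ _)]
      exact W2sq_le_D_sq _ _
    have hint2 : Integrable g (Ωs N : Measure (ProbabilityMeasure M)) := by
      refine bdd_cont_integrable _ hgc (D M ^ 2) fun μ' => ?_
      rw [abs_of_nonneg (hgb μ').1]
      exact (hgb μ').2
    have h1 : ∫ μ', g μ' ∂(Ωs N : Measure (ProbabilityMeasure M))
        ≤ ∫ μ', (W2sq (μ' : Measure M) (μbs N : Measure M) + e N)
            ∂(Ωs N : Measure (ProbabilityMeasure M)) :=
      integral_mono hint2 (hint1.add (integrable_const _)) (fun μ' => hcomp N μ')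
    rw [integral_add hint1 (integrable_const _), integral_const] at h1
    simp only [measure_univ, ENNReal.toReal_one, smul_eq_mul, one_mul, probReal_univ] at h1
    have h2 := hbc N ν
    have h3 : (∫ μ', W2sq (μ' : Measure M) (ν : Measure M)
        ∂(Ωs N : Measure (ProbabilityMeasure M)))
        = ∫ μ', hfun μ' ∂(Ωs N : Measure (ProbabilityMeasure M)) := rfl
    linarith [h2, h1]
  have hL : Tendsto (fun N => (∫ μ', g μ' ∂(Ωs N : Measure (ProbabilityMeasure M))) - e N)
      atTop (nhds (∫ μ', g μ' ∂(Ω : Measure (ProbabilityMeasure M)))) := by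
    simpa using hGint.sub het
  exact le_of_tendsto_of_tendsto' hL hHint key
end

section
/- If μ̄ is a W₂-barycenter of a probability measure Ω on P(M) and W₂-barycenters of (1/2)δ_{μ̄} + (1/2)Ω are unique up to the variational characterization, then μ̄ is the unique W₂-barycenter of the measure (1/2)δ_{μ̄} + (1/2)Ω. More precisely: for every ν ∈ P(M), (1/2)W₂²(ν,μ̄) + (1/2)∫ W₂²(μ,ν) dΩ(μ) ≥ (1/2)∫ W₂²(μ,μ̄) dΩ(μ), with equality iff ν = μ̄. -/
open MeasureTheory Set Filter

section Aux
variable {M : Type*} [MetricSpace M] [CompactSpace M] [Nonempty M] [MeasurableSpace M] [BorelSpace M]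

lemma W2sq_nonneg (mu nu : Measure M) : 0 ≤ W2sq mu nu := by
  apply Real.sInf_nonneg
  rintro x ⟨γ, -, rfl⟩
  exact integral_nonneg fun p => sq_nonneg _

lemma W2sq_self (μ : ProbabilityMeasure M) : W2sq (μ : Measure M) (μ : Measure M) = 0 := by
  refine le_antisymm ?_ (W2sq_nonneg _ _)
  have hmeas : Measurable (fun x : M => (x, x)) := measurable_id.prodMk measurable_id
  have hmem : (0 : ℝ) ∈ ((fun gamma : Measure (M × M) => ∫ p, dist p.1 p.2 ^ 2 ∂gamma) ''
      {gamma | gamma.map Prod.fst = (μ : Measure M) ∧ gamma.map Prod.snd = (μ : Measure M)}) := by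
    refine ⟨(μ : Measure M).map (fun x => (x, x)), ⟨?_, ?_⟩, ?_⟩
    · have hid : (Prod.fst ∘ fun x : M => (x, x)) = id := rfl
      rw [Measure.map_map measurable_fst hmeas, hid, Measure.map_id]
    · have hid : (Prod.snd ∘ fun x : M => (x, x)) = id := rfl
      rw [Measure.map_map measurable_snd hmeas, hid, Measure.map_id]
    · show (∫ p : M × M, dist p.1 p.2 ^ 2 ∂(Measure.map (fun x => (x, x)) (μ : Measure M))) = 0
      rw [integral_map hmeas.aemeasurable (Continuous.aestronglyMeasurable (by fun_prop))]
      simp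
  exact csInf_le ⟨0, by rintro x ⟨γ, -, rfl⟩; exact integral_nonneg fun p => sq_nonneg _⟩ hmem

lemma eq_of_W2sq_eq_zero (ν μ : ProbabilityMeasure M)
    (h : W2sq (ν : Measure M) (μ : Measure M) = 0) : ν = μ := by
  have hS : ((fun gamma : Measure (M × M) => ∫ p, dist p.1 p.2 ^ 2 ∂gamma) ''
      {gamma | gamma.map Prod.fst = (ν : Measure M) ∧
        gamma.map Prod.snd = (μ : Measure M)}).Nonempty := by
    refine ⟨_, ⟨(ν : Measure M).prod (μ : Measure M), ⟨?_, ?_⟩, rfl⟩⟩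
    · simp [Measure.map_fst_prod]
    · simp [Measure.map_snd_prod]
  have key : ∀ g : M → ℝ, Continuous g →
      ∫ x, g x ∂(ν : Measure M) = ∫ x, g x ∂(μ : Measure M) := by
    intro g hg
    have habs : ∀ ε > (0:ℝ), |∫ x, g x ∂(ν : Measure M) - ∫ x, g x ∂(μ : Measure M)| ≤ ε := by
      intro ε hε
      -- bound on g
      obtain ⟨z, -, hz⟩ := isCompact_univ.exists_isMaxOn univ_nonempty
        ((continuous_abs.comp hg).continuousOn)
      set C := |g z| with hCdef
      have hC : ∀ x : M, |g x| ≤ C := fun x => hz (mem_univ x)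
      have hC0 : 0 ≤ C := abs_nonneg _
      -- uniform continuity
      have hu := CompactSpace.uniformContinuous_of_continuous (α := M) hg
      rw [Metric.uniformContinuous_iff] at hu
      obtain ⟨δ, hδpos, hδ⟩ := hu (ε/2) (by positivity)
      set K := (2*C+1)/δ^2 with hKdef
      have hK : 0 < K := by positivity
      -- pick a near-optimal coupling
      have hlt : sInf ((fun gamma : Measure (M × M) => ∫ p, dist p.1 p.2 ^ 2 ∂gamma) ''
          {gamma | gamma.map Prod.fst = (ν : Measure M) ∧
            gamma.map Prod.snd = (μ : Measure M)}) < ε/(2*K) := by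
        have : W2sq (ν : Measure M) (μ : Measure M) < ε/(2*K) := by
          rw [h]; positivity
        exact this
      obtain ⟨η, ⟨γ, ⟨hγ1, hγ2⟩, rfl⟩, hηlt⟩ := exists_lt_of_csInf_lt hS hlt
      simp only at hηlt
      have huniv : γ univ = 1 := by
        have := congrArg (fun m : Measure M => m univ) hγ1
        simpa [Measure.map_apply measurable_fst MeasurableSet.univ] using this
      haveI : IsProbabilityMeasure γ := ⟨huniv⟩
      -- integrability
      have hGf : Integrable (fun p : M × M => g p.1) γ :=
        (BoundedContinuousFunction.mkOfCompact ⟨fun p : M × M => g p.1,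
          hg.comp continuous_fst⟩).integrable γ
      have hGs : Integrable (fun p : M × M => g p.2) γ :=
        (BoundedContinuousFunction.mkOfCompact ⟨fun p : M × M => g p.2,
          hg.comp continuous_snd⟩).integrable γ
      have hdc : Continuous (fun p : M × M => dist p.1 p.2 ^ 2) := by fun_prop
      have hD : Integrable (fun p : M × M => dist p.1 p.2 ^ 2) γ :=
        (BoundedContinuousFunction.mkOfCompact ⟨fun p : M × M => dist p.1 p.2 ^ 2,
          hdc⟩).integrable γ
      have hiν : ∫ x, g x ∂(ν : Measure M) = ∫ p, g p.1 ∂γ := by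
        rw [← hγ1, integral_map measurable_fst.aemeasurable]
        exact hg.aestronglyMeasurable
      have hiμ : ∫ x, g x ∂(μ : Measure M) = ∫ p, g p.2 ∂γ := by
        rw [← hγ2, integral_map measurable_snd.aemeasurable]
        exact hg.aestronglyMeasurable
      have hsub : ∫ x, g x ∂(ν : Measure M) - ∫ x, g x ∂(μ : Measure M)
          = ∫ p, (g p.1 - g p.2) ∂γ := by
        rw [hiν, hiμ, ← integral_sub hGf hGs]
      -- pointwise bound
      have hpt : ∀ p : M × M, |g p.1 - g p.2| ≤ ε/2 + K * dist p.1 p.2 ^ 2 := by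
        intro p
        by_cases hd : dist p.1 p.2 < δ
        · have h1 := le_of_lt (hδ hd)
          rw [Real.dist_eq] at h1
          have h2 : 0 ≤ K * dist p.1 p.2 ^ 2 :=
            mul_nonneg hK.le (sq_nonneg _)
          linarith
        · push_neg at hd
          obtain ⟨ha1, ha2⟩ := abs_le.mp (hC p.1)
          obtain ⟨hb1, hb2⟩ := abs_le.mp (hC p.2)
          have h1 : |g p.1 - g p.2| ≤ 2*C := abs_le.mpr ⟨by linarith, by linarith⟩
          have hd2 : δ^2 ≤ dist p.1 p.2 ^ 2 := by
            have := pow_le_pow_left₀ hδpos.le hd 2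
            linarith
          have hKδ : K * δ^2 = 2*C+1 := div_mul_cancel₀ _ (by positivity)
          have hk2 : 2*C+1 ≤ K * dist p.1 p.2 ^ 2 := by
            nlinarith [mul_le_mul_of_nonneg_left hd2 hK.le]
          linarith
      -- integral bound
      have hint1 : |∫ p, (g p.1 - g p.2) ∂γ| ≤ ∫ p, |g p.1 - g p.2| ∂γ := by
        simpa [Real.norm_eq_abs] using
          norm_integral_le_integral_norm (fun p : M × M => g p.1 - g p.2) (μ := γ)
      have hint2 : ∫ p, |g p.1 - g p.2| ∂γ ≤ ∫ p, (ε/2 + K * dist p.1 p.2 ^ 2) ∂γ :=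
        integral_mono (hGf.sub hGs).abs
          (by exact (integrable_const _).add (hD.const_mul K)) hpt
      have hint3 : ∫ p, (ε/2 + K * dist p.1 p.2 ^ 2) ∂γ
          = ε/2 + K * ∫ p, dist p.1 p.2 ^ 2 ∂γ := by
        rw [integral_add (integrable_const _) (hD.const_mul K), integral_const,
          integral_const_mul]
        simp
      have hfin : K * (∫ p, dist p.1 p.2 ^ 2 ∂γ) ≤ ε/2 := by
        have := mul_le_mul_of_nonneg_left hηlt.le hK.le
        have hKe : K * (ε/(2*K)) = ε/2 := by
          field_simp
        linarith
      rw [hsub]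
      calc |∫ p, (g p.1 - g p.2) ∂γ| ≤ ε/2 + K * ∫ p, dist p.1 p.2 ^ 2 ∂γ := by
            rw [← hint3]; exact hint1.trans hint2
        _ ≤ ε := by linarith
    have h0 : |∫ x, g x ∂(ν : Measure M) - ∫ x, g x ∂(μ : Measure M)| ≤ 0 :=
      le_of_forall_pos_le_add (by intro ε hε; simpa using habs ε hε)
    have := abs_eq_zero.mp (le_antisymm h0 (abs_nonneg _))
    linarith [this]
  apply MeasureTheory.ProbabilityMeasure.toMeasure_injective
  apply MeasureTheory.ext_of_forall_lintegral_eq_of_IsFiniteMeasure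
  intro f
  have hf1 : ∫⁻ x, f x ∂(ν : Measure M) ≠ ⊤ := (f.lintegral_lt_top_of_nnreal _).ne
  have hf2 : ∫⁻ x, f x ∂(μ : Measure M) ≠ ⊤ := (f.lintegral_lt_top_of_nnreal _).ne
  refine (ENNReal.toReal_eq_toReal_iff' hf1 hf2).mp ?_
  rw [BoundedContinuousFunction.toReal_lintegral_coe_eq_integral,
    BoundedContinuousFunction.toReal_lintegral_coe_eq_integral]
  exact key _ (NNReal.continuous_coe.comp f.continuous)

end Aux

/-- If `μ̄` is a `W₂`-barycenter of `Ω`, then `μ̄` is the unique `W₂`-barycenter of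
`(1/2)δ_{μ̄} + (1/2)Ω`: for every `ν`,
`(1/2)W₂²(ν,μ̄) + (1/2)∫ W₂²(μ,ν) dΩ(μ) ≥ (1/2)∫ W₂²(μ,μ̄) dΩ(μ)`,
with equality iff `ν = μ̄`. -/
theorem barycenter_of_half_dirac_add_half {M : Type*} [MetricSpace M] [CompactSpace M]
    [Nonempty M] [MeasurableSpace M] [BorelSpace M]
    [MeasurableSpace (ProbabilityMeasure M)] [BorelSpace (ProbabilityMeasure M)]
    (Ω : ProbabilityMeasure (ProbabilityMeasure M)) (μb : ProbabilityMeasure M)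
    (hbc : ∀ ν : ProbabilityMeasure M,
      ∫ μ, W2sq (μ : Measure M) (μb : Measure M) ∂(Ω : Measure (ProbabilityMeasure M)) ≤
      ∫ μ, W2sq (μ : Measure M) (ν : Measure M) ∂(Ω : Measure (ProbabilityMeasure M))) :
    ∀ ν : ProbabilityMeasure M,
      ((1 / 2) * ∫ μ, W2sq (μ : Measure M) (μb : Measure M) ∂(Ω : Measure (ProbabilityMeasure M)) ≤
        (1 / 2) * W2sq (ν : Measure M) (μb : Measure M) +
        (1 / 2) * ∫ μ, W2sq (μ : Measure M) (ν : Measure M) ∂(Ω : Measure (ProbabilityMeasure M))) ∧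
      ((1 / 2) * W2sq (ν : Measure M) (μb : Measure M) +
        (1 / 2) * ∫ μ, W2sq (μ : Measure M) (ν : Measure M) ∂(Ω : Measure (ProbabilityMeasure M)) =
        (1 / 2) * ∫ μ, W2sq (μ : Measure M) (μb : Measure M) ∂(Ω : Measure (ProbabilityMeasure M))
        ↔ ν = μb) := by
  intro ν
  have hnn := W2sq_nonneg (ν : Measure M) (μb : Measure M)
  have hb := hbc ν
  refine ⟨by linarith, ?_, ?_⟩
  · intro heq
    have h0 : W2sq (ν : Measure M) (μb : Measure M) = 0 :=
      le_antisymm (by linarith) hnn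
    exact eq_of_W2sq_eq_zero ν μb h0
  · rintro rfl
    rw [W2sq_self]
    ring
end

section
/- Convexity of variance along W₂ quasi-geodesics in CAT(0) spaces: let μ be a probability measure on a CAT(0) space M and μ_t = (x ↦ γ_x(t))_# μ where γ_x are measurable families of geodesics. Then t ↦ Var(μ_t) is convex on [0,1]. -/
set_option maxHeartbeats 1000000

open MeasureTheory Set Filter

/-- A constant-speed geodesic parametrized on `[0,1]`. -/
def IsGeodesic {M : Type*} [MetricSpace M] (z : ℝ → M) : Prop :=
  ∀ s ∈ Set.Icc (0:ℝ) 1, ∀ t ∈ Set.Icc (0:ℝ) 1,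
    dist (z s) (z t) = |s - t| * dist (z 0) (z 1)

/-- Nonpositive curvature in the sense of (midpoint) comparison: `M` is an NPC (CAT(0))
space; together with completeness this characterizes Hadamard spaces. -/
def IsNPC (M : Type*) [MetricSpace M] : Prop :=
  ∀ x y : M, ∃ m : M, ∀ z : M,
    dist z m ^ 2 ≤ dist z x ^ 2 / 2 + dist z y ^ 2 / 2 - dist x y ^ 2 / 4

private lemma le_of_sq_le_sq'' {x c : ℝ} (h : x ^ 2 ≤ c ^ 2) (hx : 0 ≤ x) (hc : 0 ≤ c) :
    x ≤ c := by
  have := Real.sqrt_le_sqrt h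
  rwa [Real.sqrt_sq hx, Real.sqrt_sq hc] at this

section NPCMetric

variable {M : Type*} [MetricSpace M]

/-- Any metric midpoint satisfies the strong NPC inequality. -/
lemma npc_mid_ineq (hM : IsNPC M) {a b p : M}
    (ha : dist p a = dist a b / 2) (hb : dist p b = dist a b / 2) (z : M) :
    dist z p ^ 2 ≤ dist z a ^ 2 / 2 + dist z b ^ 2 / 2 - dist a b ^ 2 / 4 := by
  obtain ⟨m, hm⟩ := hM a b
  have h1 := hm p
  rw [ha, hb] at h1
  have h2 : dist p m = 0 := by
    nlinarith [dist_nonneg (x := p) (y := m), sq_nonneg (dist p m)]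
  have : p = m := by rwa [dist_eq_zero] at h2
  rw [this]; exact hm z

/-- Existence of metric midpoints in an NPC space. -/
lemma npc_exists_mid (hM : IsNPC M) (a b : M) :
    ∃ m : M, dist m a = dist a b / 2 ∧ dist m b = dist a b / 2 := by
  obtain ⟨m, hm⟩ := hM a b
  have h1 := hm a
  have h2 := hm b
  rw [dist_self] at h1
  rw [dist_self, dist_comm b a] at h2
  have hc : (0:ℝ) ≤ dist a b / 2 := by positivity
  have hma : dist m a ≤ dist a b / 2 := by
    rw [dist_comm]
    exact le_of_sq_le_sq'' (by nlinarith) dist_nonneg hc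
  have hmb : dist m b ≤ dist a b / 2 := by
    rw [dist_comm]
    exact le_of_sq_le_sq'' (by nlinarith) dist_nonneg hc
  have htr := dist_triangle a m b
  exact ⟨m, by linarith [dist_comm a m, dist_comm m b],
    by linarith [dist_comm a m, dist_comm m b]⟩

/-- Midpoints from a common point: if `p = mid(a,b)` and `q = mid(a,c)` then
`dist p q ≤ dist b c / 2`. -/
lemma npc_mid_common (hM : IsNPC M) {a b c p q : M}
    (hpa : dist p a = dist a b / 2) (hpb : dist p b = dist a b / 2)
    (hqa : dist q a = dist a c / 2) (hqc : dist q c = dist a c / 2) :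
    dist p q ≤ dist b c / 2 := by
  have h1 := npc_mid_ineq hM hqa hqc p
  have h2 := npc_mid_ineq hM hpa hpb c
  rw [hpa] at h1
  rw [dist_comm c a, dist_comm c b, dist_comm c p] at h2
  refine le_of_sq_le_sq'' ?_ dist_nonneg (by positivity)
  nlinarith

/-- Key geometric estimate: `dist (mid(A,B)) (mid(y₁,y₂)) ≤ (dist A y₁ + dist B y₂)/2`. -/
lemma npc_key (hM : IsNPC M) {A B P y₁ y₂ m : M}
    (hPA : dist P A = dist A B / 2) (hPB : dist P B = dist A B / 2)
    (hm1 : dist m y₁ = dist y₁ y₂ / 2) (hm2 : dist m y₂ = dist y₁ y₂ / 2) :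
    dist P m ≤ (dist A y₁ + dist B y₂) / 2 := by
  obtain ⟨Q, hQA, hQ2⟩ := npc_exists_mid hM A y₂
  have h1 : dist P Q ≤ dist B y₂ / 2 := npc_mid_common hM hPA hPB hQA hQ2
  have h2 : dist Q m ≤ dist A y₁ / 2 := by
    have hQ2' : dist Q y₂ = dist y₂ A / 2 := by rwa [dist_comm y₂ A]
    have hQA' : dist Q A = dist y₂ A / 2 := by rwa [dist_comm y₂ A]
    have hm2' : dist m y₂ = dist y₂ y₁ / 2 := by rwa [dist_comm y₂ y₁]
    have hm1' : dist m y₁ = dist y₂ y₁ / 2 := by rwa [dist_comm y₂ y₁]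
    exact npc_mid_common hM hQ2' hQA' hm2' hm1'
  calc dist P m ≤ dist P Q + dist Q m := dist_triangle _ _ _
    _ ≤ (dist A y₁ + dist B y₂) / 2 := by linarith

end NPCMetric

/-- A midpoint-convex function continuous on `[0,1]` is convex on `[0,1]`. -/
lemma convexOn_of_midpoint_convex {f : ℝ → ℝ}
    (hc : ContinuousOn f (Icc (0:ℝ) 1))
    (hmid : ∀ a ∈ Icc (0:ℝ) 1, ∀ b ∈ Icc (0:ℝ) 1, f ((a + b) / 2) ≤ (f a + f b) / 2) :
    ConvexOn ℝ (Icc (0:ℝ) 1) f := by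
  refine ⟨convex_Icc 0 1, ?_⟩
  intro x hx y hy p q hp hq hpq
  set u : ℝ → ℝ := fun lam => (1 - lam) * x + lam * y with hu
  have humem : ∀ lam ∈ Icc (0:ℝ) 1, u lam ∈ Icc (0:ℝ) 1 := by
    intro lam hlam
    exact (convex_Icc (0:ℝ) 1) hx hy (by linarith [hlam.2]) hlam.1 (by ring)
  have dyadic : ∀ n : ℕ, ∀ k : ℕ, k ≤ 2 ^ n →
      f (u ((k : ℝ) / 2 ^ n)) ≤ (1 - (k : ℝ) / 2 ^ n) * f x + ((k : ℝ) / 2 ^ n) * f y := by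
    intro n
    induction n with
    | zero =>
      intro k hk
      interval_cases k
      · simp [hu]
      · norm_num [hu]
    | succ n ih =>
      intro k hk
      rcases Nat.even_or_odd k with ⟨j, hj⟩ | ⟨j, hj⟩
      · have hj2 : j ≤ 2 ^ n := by omega
        have : (k : ℝ) / 2 ^ (n + 1) = (j : ℝ) / 2 ^ n := by
          subst hj; push_cast; ring
        rw [this]; exact ih j hj2
      · have hj2 : j + 1 ≤ 2 ^ n := by omega
        have hj1 : j ≤ 2 ^ n := by omega
        set l1 : ℝ := (j : ℝ) / 2 ^ n with hl1
        set l2 : ℝ := ((j : ℝ) + 1) / 2 ^ n with hl2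
        have hl1m : l1 ∈ Icc (0:ℝ) 1 := by
          constructor
          · positivity
          · rw [hl1, div_le_one (by positivity)]
            exact_mod_cast hj1
        have hl2m : l2 ∈ Icc (0:ℝ) 1 := by
          constructor
          · positivity
          · rw [hl2, div_le_one (by positivity)]
            exact_mod_cast hj2
        have hkey : (k : ℝ) / 2 ^ (n + 1) = (l1 + l2) / 2 := by
          subst hj; rw [hl1, hl2]; push_cast; ring
        have humid : u ((k : ℝ) / 2 ^ (n + 1)) = (u l1 + u l2) / 2 := by
          rw [hkey, hu]; ring
        have h1 := ih j hj1
        have h2 := ih (j + 1) hj2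
        have h2' : f (u l2) ≤ (1 - l2) * f x + l2 * f y := by
          have : ((j : ℝ) + 1) = ((j + 1 : ℕ) : ℝ) := by push_cast; ring
          rw [hl2, this]; exact h2
        calc f (u ((k : ℝ) / 2 ^ (n + 1))) = f ((u l1 + u l2) / 2) := by rw [humid]
          _ ≤ (f (u l1) + f (u l2)) / 2 := hmid _ (humem _ hl1m) _ (humem _ hl2m)
          _ ≤ ((1 - l1) * f x + l1 * f y + ((1 - l2) * f x + l2 * f y)) / 2 := by linarith
          _ = (1 - (k : ℝ) / 2 ^ (n + 1)) * f x + ((k : ℝ) / 2 ^ (n + 1)) * f y := by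
              rw [hkey]; ring
  set lam := q with hlam
  have hlam01 : lam ∈ Icc (0:ℝ) 1 := ⟨hq, by linarith⟩
  set s : ℕ → ℝ := fun n => (⌊lam * 2 ^ n⌋₊ : ℝ) / 2 ^ n with hs
  have hsle : ∀ n, ⌊lam * 2 ^ n⌋₊ ≤ 2 ^ n := by
    intro n
    have : lam * 2 ^ n ≤ (2 : ℝ) ^ n := by
      nlinarith [hlam01.2, pow_pos (by norm_num : (0:ℝ) < 2) n]
    calc ⌊lam * 2 ^ n⌋₊ ≤ ⌊(2:ℝ) ^ n⌋₊ := Nat.floor_le_floor this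
      _ = 2 ^ n := by
          rw [show ((2:ℝ) ^ n) = ((2 ^ n : ℕ) : ℝ) by push_cast; ring, Nat.floor_natCast]
  have hsmem : ∀ n, s n ∈ Icc (0:ℝ) 1 := by
    intro n
    constructor
    · positivity
    · rw [hs, div_le_one (by positivity)]
      exact_mod_cast hsle n
  have hdist : ∀ n, |s n - lam| ≤ (1 / 2 : ℝ) ^ n := by
    intro n
    have hpow : (0:ℝ) < 2 ^ n := by positivity
    have h1 : (⌊lam * 2 ^ n⌋₊ : ℝ) ≤ lam * 2 ^ n := Nat.floor_le (by positivity)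
    have h2 : lam * 2 ^ n < (⌊lam * 2 ^ n⌋₊ : ℝ) + 1 := Nat.lt_floor_add_one _
    rw [abs_le]
    constructor
    · have hhalf : ((1:ℝ) / 2) ^ n = 1 / 2 ^ n := by rw [div_pow, one_pow]
      have h3 : lam ≤ ((⌊lam * 2 ^ n⌋₊ : ℝ) + 1) / 2 ^ n := by
        rw [le_div_iff₀ hpow]; linarith
      have h4 : ((⌊lam * 2 ^ n⌋₊ : ℝ) + 1) / 2 ^ n
          = (⌊lam * 2 ^ n⌋₊ : ℝ) / 2 ^ n + 1 / 2 ^ n := add_div _ _ _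
      rw [hs, hhalf]
      linarith
    · rw [hs]
      have : (⌊lam * 2 ^ n⌋₊ : ℝ) / 2 ^ n ≤ lam := by
        rw [div_le_iff₀ hpow]; linarith
      calc (⌊lam * 2 ^ n⌋₊ : ℝ) / 2 ^ n - lam ≤ 0 := by linarith
        _ ≤ (1 / 2 : ℝ) ^ n := by positivity
  have hslim : Tendsto s atTop (nhds lam) := by
    rw [← tendsto_sub_nhds_zero_iff]
    apply squeeze_zero_norm hdist
    exact tendsto_pow_atTop_nhds_zero_of_lt_one (by norm_num) (by norm_num)
  have hineq : ∀ n, f (u (s n)) ≤ (1 - s n) * f x + s n * f y := fun n =>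
    dyadic n _ (hsle n)
  have hucont : Continuous u := by fun_prop
  have hulim : Tendsto (fun n => u (s n)) atTop (nhds (u lam)) :=
    (hucont.tendsto _).comp hslim
  have hflim : Tendsto (fun n => f (u (s n))) atTop (nhds (f (u lam))) := by
    have hmemu : ∀ n, u (s n) ∈ Icc (0:ℝ) 1 := fun n => humem _ (hsmem n)
    exact (hc.continuousWithinAt (humem _ hlam01)).tendsto.comp
      (tendsto_nhdsWithin_of_tendsto_nhds_of_eventually_within _ hulim
        (Eventually.of_forall hmemu))
  have hrlim : Tendsto (fun n => (1 - s n) * f x + s n * f y) atTop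
      (nhds ((1 - lam) * f x + lam * f y)) :=
    ((tendsto_const_nhds.sub hslim).mul tendsto_const_nhds).add
      (hslim.mul tendsto_const_nhds)
  have hfinal : f (u lam) ≤ (1 - lam) * f x + lam * f y :=
    le_of_tendsto_of_tendsto' hflim hrlim hineq
  have hpeq : p = 1 - lam := by rw [hlam]; linarith
  have hpt : p • x + q • y = u lam := by
    simp only [smul_eq_mul, hu, hpeq, hlam]
  rw [hpt]
  calc f (u lam) ≤ (1 - lam) * f x + lam * f y := hfinal
    _ = p • f x + q • f y := by simp only [smul_eq_mul, hpeq, hlam]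

/-- Convexity of the variance along `W₂` quasi-geodesics in a complete NPC (CAT(0)) space:
if `μ_t = (x ↦ γ_x(t))_# μ` for a measurable family of geodesics `γ_x`, then
`t ↦ Var(μ_t)` is convex on `[0,1]`. -/
theorem variance_convex_along_quasiGeodesic {M : Type*} [MetricSpace M] [CompleteSpace M]
    [Nonempty M] [MeasurableSpace M] [BorelSpace M] (hM : IsNPC M)
    (μ : Measure M) [IsProbabilityMeasure μ]
    (γ : M → ℝ → M)
    (hgeo : ∀ᵐ x ∂μ, IsGeodesic (γ x) ∧ γ x 0 = x)
    (hmeas : ∀ t ∈ Set.Icc (0:ℝ) 1, Measurable (fun x => γ x t))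
    (y₀ : M)
    (hmom0 : Integrable (fun x => dist x y₀ ^ 2) μ)
    (hmom1 : Integrable (fun x => dist (γ x 1) y₀ ^ 2) μ) :
    ConvexOn ℝ (Set.Icc (0:ℝ) 1) (fun t => var (μ.map (fun x => γ x t))) := by
  -- notation
  set g : ℝ → M → ℝ := fun t y => ∫ x, dist (γ x t) y ^ 2 ∂μ with hg_def
  set f : ℝ → ℝ := fun t => ⨅ y : M, g t y with hf_def
  -- pointwise domination for integrability
  have hdom : ∀ t ∈ Icc (0:ℝ) 1, ∀ y : M, ∀ᵐ x ∂μ,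
      dist (γ x t) y ^ 2 ≤
        12 * dist x y₀ ^ 2 + 3 * dist (γ x 1) y₀ ^ 2 + 3 * dist y₀ y ^ 2 := by
    intro t ht y
    filter_upwards [hgeo] with x hx
    obtain ⟨hgx, h0⟩ := hx
    have h := hgx t ht 0 ⟨le_refl 0, zero_le_one⟩
    rw [h0] at h
    have habs : |t - 0| ≤ 1 := by rw [sub_zero, abs_of_nonneg ht.1]; exact ht.2
    have e1 : dist (γ x t) x ≤ dist x y₀ + dist (γ x 1) y₀ := by
      calc dist (γ x t) x = |t - 0| * dist x (γ x 1) := h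
        _ ≤ 1 * dist x (γ x 1) := mul_le_mul_of_nonneg_right habs dist_nonneg
        _ = dist x (γ x 1) := one_mul _
        _ ≤ dist x y₀ + dist y₀ (γ x 1) := dist_triangle _ _ _
        _ = dist x y₀ + dist (γ x 1) y₀ := by rw [dist_comm y₀]
    have e2 : dist (γ x t) y ≤ 2 * dist x y₀ + dist (γ x 1) y₀ + dist y₀ y := by
      calc dist (γ x t) y ≤ dist (γ x t) x + dist x y₀ + dist y₀ y := dist_triangle4 _ _ _ _
        _ ≤ 2 * dist x y₀ + dist (γ x 1) y₀ + dist y₀ y := by linarith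
    have e3 : dist (γ x t) y ^ 2 ≤ (2 * dist x y₀ + dist (γ x 1) y₀ + dist y₀ y) ^ 2 :=
      pow_le_pow_left₀ dist_nonneg e2 2
    nlinarith [sq_nonneg (2 * dist x y₀ - dist (γ x 1) y₀),
      sq_nonneg (2 * dist x y₀ - dist y₀ y), sq_nonneg (dist (γ x 1) y₀ - dist y₀ y)]
  -- the dominating function is integrable
  have hGint : ∀ y : M, Integrable
      (fun x => 12 * dist x y₀ ^ 2 + 3 * dist (γ x 1) y₀ ^ 2 + 3 * dist y₀ y ^ 2) μ := by
    intro y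
    exact ((hmom0.const_mul 12).add (hmom1.const_mul 3)).add (integrable_const _)
  -- integrability of the second moments along the flow
  have hint : ∀ t ∈ Icc (0:ℝ) 1, ∀ y : M,
      Integrable (fun x => dist (γ x t) y ^ 2) μ := by
    intro t ht y
    refine (hGint y).mono' ?_ ?_
    · exact (((continuous_id.dist continuous_const).measurable.comp (hmeas t ht)).pow_const
        2).aestronglyMeasurable
    · filter_upwards [hdom t ht y] with x hx
      rwa [Real.norm_eq_abs, abs_of_nonneg (by positivity)]
  -- var of the pushforward equals the inf over y of the composed integrals
  have hvar : ∀ t ∈ Icc (0:ℝ) 1, var (μ.map (fun x => γ x t)) = f t := by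
    intro t ht
    unfold var
    refine iInf_congr fun y => ?_
    exact integral_map (hmeas t ht).aemeasurable
      (((continuous_id.dist continuous_const).pow 2).aestronglyMeasurable)
  -- basic facts about g and f
  have hg_nonneg : ∀ t y, 0 ≤ g t y := fun t y =>
    integral_nonneg fun x => by positivity
  have hbdd : ∀ t, BddBelow (Set.range fun y => g t y) := by
    intro t
    refine ⟨0, ?_⟩
    rintro z ⟨y, rfl⟩
    exact hg_nonneg t y
  have hf_le : ∀ t, ∀ y, f t ≤ g t y := fun t y => ciInf_le (hbdd t) y
  have hf_nonneg : ∀ t, 0 ≤ f t := fun t => le_ciInf fun y => hg_nonneg t y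
  -- uniform bound on g t y₀ and hence on f
  set C₀ : ℝ := ∫ x, (12 * dist x y₀ ^ 2 + 3 * dist (γ x 1) y₀ ^ 2 + 3 * dist y₀ y₀ ^ 2) ∂μ
    with hC0_def
  have hC0_nonneg : 0 ≤ C₀ := integral_nonneg fun x => by positivity
  have hfC0 : ∀ t ∈ Icc (0:ℝ) 1, f t ≤ C₀ := by
    intro t ht
    refine (hf_le t y₀).trans ?_
    exact integral_mono_ae (hint t ht y₀) (hGint y₀) (hdom t ht y₀)
  -- the quantity K controlling the speed
  set K : ℝ := ∫ x, (2 * dist x y₀ ^ 2 + 2 * dist (γ x 1) y₀ ^ 2) ∂μ with hK_def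
  have hK_nonneg : 0 ≤ K := integral_nonneg fun x => by positivity
  have hBint : Integrable (fun x => 2 * dist x y₀ ^ 2 + 2 * dist (γ x 1) y₀ ^ 2) μ :=
    (hmom0.const_mul 2).add (hmom1.const_mul 2)
  -- the shift estimate
  have hshift : ∀ t ∈ Icc (0:ℝ) 1, ∀ t' ∈ Icc (0:ℝ) 1, ∀ y : M,
      g t y ≤ (1 + |t - t'|) * g t' y + (|t - t'| + |t - t'| ^ 2) * K := by
    intro t ht t' ht' y
    set δ := |t - t'| with hδ
    have hδ0 : 0 ≤ δ := abs_nonneg _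
    have hptw : ∀ᵐ x ∂μ, dist (γ x t) y ^ 2 ≤
        (1 + δ) * dist (γ x t') y ^ 2 +
          (δ + δ ^ 2) * (2 * dist x y₀ ^ 2 + 2 * dist (γ x 1) y₀ ^ 2) := by
      filter_upwards [hgeo] with x hx
      obtain ⟨hgx, h0⟩ := hx
      have h := hgx t ht t' ht'
      rw [h0] at h
      set L := dist x (γ x 1) with hL
      set a := dist x y₀ with ha
      set b := dist (γ x 1) y₀ with hb
      have hLab : L ≤ a + b := by
        calc L ≤ dist x y₀ + dist y₀ (γ x 1) := dist_triangle _ _ _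
          _ = a + b := by rw [dist_comm y₀]
      have hL0 : 0 ≤ L := dist_nonneg
      have ha0 : 0 ≤ a := dist_nonneg
      have hb0 : 0 ≤ b := dist_nonneg
      have htri : dist (γ x t) y ≤ dist (γ x t') y + δ * L := by
        calc dist (γ x t) y ≤ dist (γ x t) (γ x t') + dist (γ x t') y := dist_triangle _ _ _
          _ = dist (γ x t') y + δ * L := by rw [h]; ring
      set d' := dist (γ x t') y with hd'
      have hd'0 : 0 ≤ d' := dist_nonneg
      have h1 : dist (γ x t) y ^ 2 ≤ (d' + δ * L) ^ 2 :=
        pow_le_pow_left₀ dist_nonneg htri 2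
      have h3 : 2 * (d' * L) ≤ d' ^ 2 + L ^ 2 := by nlinarith [sq_nonneg (d' - L)]
      have h4 : L ^ 2 ≤ 2 * a ^ 2 + 2 * b ^ 2 := by
        nlinarith [sq_nonneg (a - b), pow_le_pow_left₀ hL0 hLab 2]
      have h5 : δ * (2 * (d' * L)) ≤ δ * (d' ^ 2 + L ^ 2) :=
        mul_le_mul_of_nonneg_left h3 hδ0
      have h6 : δ * L ^ 2 ≤ δ * (2 * a ^ 2 + 2 * b ^ 2) :=
        mul_le_mul_of_nonneg_left h4 hδ0
      have h7 : δ ^ 2 * L ^ 2 ≤ δ ^ 2 * (2 * a ^ 2 + 2 * b ^ 2) :=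
        mul_le_mul_of_nonneg_left h4 (sq_nonneg δ)
      nlinarith [h1, h5, h6, h7]
    calc g t y ≤ ∫ x, ((1 + δ) * dist (γ x t') y ^ 2 +
          (δ + δ ^ 2) * (2 * dist x y₀ ^ 2 + 2 * dist (γ x 1) y₀ ^ 2)) ∂μ := by
          exact integral_mono_ae (hint t ht y)
            (((hint t' ht' y).const_mul (1 + δ)).add (hBint.const_mul (δ + δ ^ 2))) hptw
      _ = (1 + δ) * g t' y + (δ + δ ^ 2) * K := by
          rw [integral_add ((hint t' ht' y).const_mul (1 + δ)) (hBint.const_mul (δ + δ ^ 2)),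
            integral_const_mul, integral_const_mul]
  -- one-sided Lipschitz estimate for f
  have hlip : ∀ t ∈ Icc (0:ℝ) 1, ∀ t' ∈ Icc (0:ℝ) 1,
      f t ≤ f t' + |t - t'| * (C₀ + 2 * K) := by
    intro t ht t' ht'
    set δ := |t - t'| with hδ
    have hδ0 : 0 ≤ δ := abs_nonneg _
    have hδ1 : δ ≤ 1 := by
      rw [hδ, abs_sub_le_iff]
      constructor <;> linarith [ht.1, ht.2, ht'.1, ht'.2]
    refine le_of_forall_pos_le_add ?_
    intro ε hε
    obtain ⟨y, hy⟩ : ∃ y, g t' y < f t' + ε / 2 :=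
      exists_lt_of_ciInf_lt (lt_add_of_pos_right _ (by positivity))
    have hyle : g t' y ≤ f t' + ε / 2 := le_of_lt hy
    have h1 : f t ≤ (1 + δ) * g t' y + (δ + δ ^ 2) * K :=
      (hf_le t y).trans (hshift t ht t' ht' y)
    have h2 : δ * g t' y ≤ δ * (f t' + ε / 2) := mul_le_mul_of_nonneg_left hyle hδ0
    have h3 : δ * (f t' + ε / 2) ≤ δ * (C₀ + ε / 2) :=
      mul_le_mul_of_nonneg_left (by linarith [hfC0 t' ht']) hδ0
    have h4 : δ * (C₀ + ε / 2) = δ * C₀ + δ * (ε / 2) := by ring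
    have h5 : δ * (ε / 2) ≤ ε / 2 := mul_le_of_le_one_left (by positivity) hδ1
    have h6 : δ ^ 2 * K ≤ δ * K := by
      have : δ ^ 2 ≤ δ := by nlinarith
      exact mul_le_mul_of_nonneg_right this hK_nonneg
    nlinarith [hg_nonneg t' y]
  -- continuity of f on [0,1]
  have hcont : ContinuousOn f (Icc (0:ℝ) 1) := by
    have hC : 0 ≤ C₀ + 2 * K := by linarith
    have : LipschitzOnWith (C₀ + 2 * K).toNNReal f (Icc (0:ℝ) 1) := by
      refine LipschitzOnWith.of_dist_le_mul ?_
      intro t ht t' ht'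
      rw [Real.dist_eq, Real.dist_eq, Real.coe_toNNReal _ hC, abs_le]
      constructor
      · have := hlip t' ht' t ht
        rw [abs_sub_comm] at this
        linarith
      · linarith [hlip t ht t' ht']
    exact this.continuousOn
  -- midpoint convexity of f
  have hmidf : ∀ a ∈ Icc (0:ℝ) 1, ∀ b ∈ Icc (0:ℝ) 1,
      f ((a + b) / 2) ≤ (f a + f b) / 2 := by
    intro a ha b hb
    have hmidmem : (a + b) / 2 ∈ Icc (0:ℝ) 1 :=
      ⟨by linarith [ha.1, hb.1], by linarith [ha.2, hb.2]⟩
    refine le_of_forall_pos_le_add ?_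
    intro ε hε
    obtain ⟨y₁, hy₁⟩ : ∃ y, g a y < f a + ε :=
      exists_lt_of_ciInf_lt (lt_add_of_pos_right _ hε)
    obtain ⟨y₂, hy₂⟩ : ∃ y, g b y < f b + ε :=
      exists_lt_of_ciInf_lt (lt_add_of_pos_right _ hε)
    obtain ⟨m, hm1, hm2⟩ := npc_exists_mid hM y₁ y₂
    have hptw : ∀ᵐ x ∂μ, dist (γ x ((a + b) / 2)) m ^ 2 ≤
        dist (γ x a) y₁ ^ 2 / 2 + dist (γ x b) y₂ ^ 2 / 2 := by
      filter_upwards [hgeo] with x hx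
      obtain ⟨hgx, h0⟩ := hx
      set A := γ x a with hA
      set B := γ x b with hB
      set P := γ x ((a + b) / 2) with hP
      have habs1 : |(a + b) / 2 - a| = |a - b| / 2 := by
        rw [show (a + b) / 2 - a = (b - a) / 2 by ring, abs_div, abs_of_nonneg (by norm_num : (0:ℝ) ≤ 2), abs_sub_comm]
      have habs2 : |(a + b) / 2 - b| = |a - b| / 2 := by
        rw [show (a + b) / 2 - b = (a - b) / 2 by ring, abs_div, abs_of_nonneg (by norm_num : (0:ℝ) ≤ 2)]
      have hAB : dist A B = |a - b| * dist (γ x 0) (γ x 1) := hgx a ha b hb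
      have hPA : dist P A = dist A B / 2 := by
        rw [hgx ((a + b) / 2) hmidmem a ha, habs1, hAB]; ring
      have hPB : dist P B = dist A B / 2 := by
        rw [hgx ((a + b) / 2) hmidmem b hb, habs2, hAB]; ring
      have hkey := npc_key hM hPA hPB hm1 hm2
      have hsq : dist P m ^ 2 ≤ ((dist A y₁ + dist B y₂) / 2) ^ 2 :=
        pow_le_pow_left₀ dist_nonneg hkey 2
      nlinarith [sq_nonneg (dist A y₁ - dist B y₂)]
    have hstep : f ((a + b) / 2) ≤ g a y₁ / 2 + g b y₂ / 2 := by
      refine (hf_le _ m).trans ?_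
      calc g ((a + b) / 2) m ≤
          ∫ x, (dist (γ x a) y₁ ^ 2 / 2 + dist (γ x b) y₂ ^ 2 / 2) ∂μ :=
            integral_mono_ae (hint _ hmidmem m)
              (((hint a ha y₁).div_const 2).add ((hint b hb y₂).div_const 2)) hptw
        _ = g a y₁ / 2 + g b y₂ / 2 := by
            rw [integral_add ((hint a ha y₁).div_const 2) ((hint b hb y₂).div_const 2),
              integral_div, integral_div]
    linarith
  -- conclusion: transfer to var via the pushforward identity
  have hF : ∀ t ∈ Icc (0:ℝ) 1, (fun t => var (μ.map (fun x => γ x t))) t = f t := hvar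
  have := convexOn_of_midpoint_convex
    (f := fun t => var (μ.map (fun x => γ x t)))
    (hcont.congr fun t ht => (hF t ht))
    (fun a ha b hb => by
      rw [hvar a ha, hvar b hb, hvar _ (⟨by linarith [ha.1, hb.1], by linarith [ha.2, hb.2]⟩ :
        (a + b) / 2 ∈ Icc (0:ℝ) 1)]
      exact hmidf a ha b hb)
  exact this
end

section
/- The barycenter of the orbit equals the W₂-projection onto the invariant set: with G, H, μ, Ω_μ as before and μ̄ the unique W₂-barycenter of Ω_μ, μ̄ is the unique minimizer of W₂²(ν, μ) over all ν in the G-invariant set I_G = {ν ∈ P(M) : g_# ν = ν for all g ∈ G}. -/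
open MeasureTheory Set Filter

section Aux

variable {M : Type*} [MetricSpace M] [CompactSpace M] [MeasurableSpace M] [BorelSpace M]

private lemma cost_cont : Continuous (fun p : M × M => dist p.1 p.2 ^ 2) :=
  (continuous_fst.dist continuous_snd).pow 2

/-- The coupling-cost image set defining `W2sq`. -/
private def CSet (α β : Measure M) : Set ℝ :=
  (fun gamma : Measure (M × M) => ∫ p, dist p.1 p.2 ^ 2 ∂gamma) ''
    {gamma | gamma.map Prod.fst = α ∧ gamma.map Prod.snd = β}

private lemma W2sq_eq_sInf (α β : Measure M) : W2sq α β = sInf (CSet α β) := rfl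

private lemma CSet_swap_subset (α β : Measure M) : CSet α β ⊆ CSet β α := by
  rintro _ ⟨γ, ⟨h1, h2⟩, rfl⟩
  refine ⟨γ.map Prod.swap, ⟨?_, ?_⟩, ?_⟩
  · rw [Measure.map_map measurable_fst measurable_swap]
    exact h2
  · rw [Measure.map_map measurable_snd measurable_swap]
    exact h1
  · show (∫ p : M × M, dist p.1 p.2 ^ 2 ∂(γ.map Prod.swap)) = ∫ p : M × M, dist p.1 p.2 ^ 2 ∂γ
    rw [integral_map measurable_swap.aemeasurable cost_cont.aestronglyMeasurable]
    simp [dist_comm]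

private lemma W2sq_comm (α β : Measure M) : W2sq α β = W2sq β α :=
  congrArg sInf (Subset.antisymm (CSet_swap_subset α β) (CSet_swap_subset β α))

private lemma CSet_map_subset (α β : Measure M) (T : M → M) (hT : Isometry T) :
    CSet α β ⊆ CSet (α.map T) (β.map T) := by
  have hTm : Measurable T := hT.continuous.measurable
  rintro _ ⟨γ, ⟨h1, h2⟩, rfl⟩
  refine ⟨γ.map (Prod.map T T), ⟨?_, ?_⟩, ?_⟩
  · rw [Measure.map_map measurable_fst (hTm.prodMap hTm)]
    rw [show (Prod.fst ∘ Prod.map T T : M × M → M) = T ∘ Prod.fst from rfl]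
    rw [← Measure.map_map hTm measurable_fst, h1]
  · rw [Measure.map_map measurable_snd (hTm.prodMap hTm)]
    rw [show (Prod.snd ∘ Prod.map T T : M × M → M) = T ∘ Prod.snd from rfl]
    rw [← Measure.map_map hTm measurable_snd, h2]
  · show (∫ p : M × M, dist p.1 p.2 ^ 2 ∂(γ.map (Prod.map T T))) = ∫ p : M × M, dist p.1 p.2 ^ 2 ∂γ
    rw [integral_map (hTm.prodMap hTm).aemeasurable cost_cont.aestronglyMeasurable]
    simp [Prod.map, hT.dist_eq]

private lemma W2sq_map_iso (α β : Measure M) (T T' : M → M) (hT : Isometry T)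
    (hT' : Isometry T') (hT'T : ∀ x, T' (T x) = x) :
    W2sq (α.map T) (β.map T) = W2sq α β := by
  have hTm : Measurable T := hT.continuous.measurable
  have hT'm : Measurable T' := hT'.continuous.measurable
  have hid : ∀ ρ : Measure M, (ρ.map T).map T' = ρ := by
    intro ρ
    rw [Measure.map_map hT'm hTm, show T' ∘ T = id from funext hT'T, Measure.map_id]
  refine congrArg sInf (Subset.antisymm ?_ (CSet_map_subset α β T hT))
  have h := CSet_map_subset (α.map T) (β.map T) T' hT'
  rwa [hid α, hid β] at h

end Aux

/-- The unique `W₂`-barycenter of the orbit measure equals the `W₂`-projection of `μ`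
onto the set `I_G` of `G`-invariant measures: it lies in `I_G` and is the unique
minimizer of `ν ↦ W₂²(ν, μ)` over `I_G`. -/
theorem orbit_barycenter_is_W2_projection {M : Type*} [MetricSpace M] [CompactSpace M]
    [Nonempty M] [MeasurableSpace M] [BorelSpace M]
    {G : Type*} [Group G] [TopologicalSpace G] [IsTopologicalGroup G] [CompactSpace G]
    [MeasurableSpace G] [BorelSpace G] [MeasurableMul G]
    (H : Measure G) [IsProbabilityMeasure H] [H.IsMulLeftInvariant]
    [MulAction G M] (hiso : ∀ g : G, Isometry (fun x : M => g • x))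
    (μ : Measure M) [IsProbabilityMeasure μ]
    (μb : Measure M) [IsProbabilityMeasure μb]
    (hbc : ∀ ν : Measure M, IsProbabilityMeasure ν →
      ∫ g, W2sq (μ.map (fun x => g • x)) μb ∂H ≤ ∫ g, W2sq (μ.map (fun x => g • x)) ν ∂H)
    (huniq : ∀ ν : Measure M, IsProbabilityMeasure ν →
      (∫ g, W2sq (μ.map (fun x => g • x)) ν ∂H =
        ∫ g, W2sq (μ.map (fun x => g • x)) μb ∂H) → ν = μb) :
    (∀ g : G, μb.map (fun x => g • x) = μb) ∧
    ∀ ν : Measure M, IsProbabilityMeasure ν → (∀ g : G, ν.map (fun x => g • x) = ν) →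
      (W2sq μb μ ≤ W2sq ν μ ∧ (W2sq ν μ = W2sq μb μ → ν = μb)) := by
  have hmeas : ∀ g : G, Measurable (fun x : M => g • x) :=
    fun g => (hiso g).continuous.measurable
  -- invariance of μb
  have hinv : ∀ g : G, μb.map (fun x => g • x) = μb := by
    intro g₀
    have hprob : IsProbabilityMeasure (μb.map (fun x => g₀ • x)) :=
      Measure.isProbabilityMeasure_map (hmeas g₀).aemeasurable
    refine huniq _ hprob ?_
    have key : ∀ g : G, W2sq (μ.map (fun x => g • x)) (μb.map (fun x => g₀ • x)) =
        W2sq (μ.map (fun x => (g₀⁻¹ * g) • x)) μb := by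
      intro g
      have := W2sq_map_iso (μ.map (fun x => g • x)) (μb.map (fun x => g₀ • x))
        (fun x => g₀⁻¹ • x) (fun x => g₀ • x) (hiso g₀⁻¹) (hiso g₀)
        (fun x => smul_inv_smul g₀ x)
      rw [← this]
      congr 1
      · rw [Measure.map_map (hmeas g₀⁻¹) (hmeas g)]
        rw [show ((fun x : M => g₀⁻¹ • x) ∘ (fun x : M => g • x)) =
          (fun x : M => (g₀⁻¹ * g) • x) from funext fun x => (mul_smul g₀⁻¹ g x).symm]
      · rw [Measure.map_map (hmeas g₀⁻¹) (hmeas g₀)]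
        rw [show ((fun x : M => g₀⁻¹ • x) ∘ (fun x : M => g₀ • x)) = id from
          funext fun x => inv_smul_smul g₀ x, Measure.map_id]
    calc ∫ g, W2sq (μ.map (fun x => g • x)) (μb.map (fun x => g₀ • x)) ∂H
        = ∫ g, W2sq (μ.map (fun x => (g₀⁻¹ * g) • x)) μb ∂H := by
          exact integral_congr_ae (Filter.Eventually.of_forall key)
      _ = ∫ g, W2sq (μ.map (fun x => g • x)) μb ∂H :=
          integral_mul_left_eq_self (fun g => W2sq (μ.map (fun x => g • x)) μb) g₀⁻¹
  refine ⟨hinv, fun ν hνp hν => ?_⟩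
  -- for an invariant probability measure ρ, the orbit-average cost is W2sq μ ρ
  have havg : ∀ ρ : Measure M, (∀ g : G, ρ.map (fun x => g • x) = ρ) →
      ∫ g, W2sq (μ.map (fun x => g • x)) ρ ∂H = W2sq μ ρ := by
    intro ρ hρ
    have : ∀ g : G, W2sq (μ.map (fun x => g • x)) ρ = W2sq μ ρ := by
      intro g
      conv_lhs => rw [← hρ g]
      exact W2sq_map_iso μ ρ (fun x => g • x) (fun x => g⁻¹ • x) (hiso g) (hiso g⁻¹)
        (fun x => inv_smul_smul g x)
    rw [integral_congr_ae (Filter.Eventually.of_forall this), integral_const]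
    simp
  have hμb := havg μb hinv
  have hν' := havg ν hν
  constructor
  · have := hbc ν hνp
    rw [hμb, hν'] at this
    rw [W2sq_comm μb μ, W2sq_comm ν μ]
    exact this
  · intro heq
    refine huniq ν hνp ?_
    rw [hμb, hν', W2sq_comm μ ν, W2sq_comm μ μb, heq]
end
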